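/- arXiv:2104.13529 — 3 statements merged into one kernel-verified Lean document; each statement's English description precedes it below -/
import Mathlib

section
/- Let p, p′, r, r′ : ℤ → [0,1] and θ, θ′, κ, κ′ : ℤ → [0,2π) be such that both parameter families are normalized in the following sense (stated for (p,r,θ,κ); the same conditions are required of (p′,r′,θ′,κ′)): (a) p_x < 1 for all x ∈ ℤ (so q_x = √(1−p_x²) ≠ 0); (b) θ_x = 0 whenever p_x = 0, and κ_x = 0 whenever r_x = 0; (c) if {x ≥ 0 : r_x ≠ 0} is nonempty then κ_w = 0 for w = min{x ≥ 0 : r_x ≠ 0}; otherwise, if {x ≤ −1 : r_x ≠ 0} is nonempty then κ_w = 0 for w = max{x ≤ −1 : r_x ≠ 0}; otherwise (r ≡ 0), if {x ≥ 0 : p_x ≠ 0} is nonempty then θ_w = 0 for w = min{x ≥ 0 : p_x ≠ 0}; otherwise, if {x ≤ −1 : p_x ≠ 0} is nonempty then θ_w = 0 for w = max{x ≤ −1 : p_x ≠ 0}. Then U_{p,r,θ,κ} and U_{p′,r′,θ′,κ′} are unitarily equivalent if and only if p = p′, r = r′, θ = θ′ and κ = κ′. -/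
noncomputable section

/-- `H = ⊕_{x∈ℤ} H_x`, the ℓ² direct sum with each `H_x` a copy of `ℂ²`. -/
abbrev H : Type := lp (fun _ : ℤ × Fin 2 => ℂ) 2

/-- The canonical orthonormal basis vector `eᵢˣ` of `H_x` viewed in `H`. -/
def e (x : ℤ) (i : Fin 2) : H := lp.single 2 (x, i) 1

/-- The subspace `H_x` of `H`. -/
def Hx (x : ℤ) : Submodule ℂ H := Submodule.span ℂ {e x 0, e x 1}

/-- The rank-one operator `|u⟩⟨v| : w ↦ ⟨v, w⟩ u`. -/
def ketbra (u v : H) : H →L[ℂ] H := ((innerSL ℂ) v).smulRight u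

/-- The orthogonal projection of `H` onto `H_x`. -/
def P (x : ℤ) : H →L[ℂ] H := ketbra (e x 0) (e x 0) + ketbra (e x 1) (e x 1)

/-- A unitary (linear isometric equivalence) viewed as a continuous linear map. -/
def clm (U : H ≃ₗᵢ[ℂ] H) : H →L[ℂ] H := U.toLinearIsometry.toContinuousLinearMap

/-- `{u, v}` is an orthonormal basis of the two dimensional space `H_x`. -/
def ONBx (x : ℤ) (u v : H) : Prop :=
  u ∈ Hx x ∧ v ∈ Hx x ∧ ‖u‖ = 1 ∧ ‖v‖ = 1 ∧ (inner ℂ u v : ℂ) = 0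

/-- The SSQW conditions: `U H_x ⊆ H_{x-1} ⊕ H_x ⊕ H_{x+1}` and
`rank(P_{x±1} U P_x) ≤ 1` for all `x`. -/
def SSQW (U : H ≃ₗᵢ[ℂ] H) : Prop :=
  (∀ x : ℤ, ∀ ψ ∈ Hx x, U ψ ∈ Hx (x - 1) ⊔ Hx x ⊔ Hx (x + 1)) ∧
  (∀ x : ℤ, LinearMap.rank (((P (x + 1)).comp ((clm U).comp (P x))).toLinearMap) ≤ 1) ∧
  (∀ x : ℤ, LinearMap.rank (((P (x - 1)).comp ((clm U).comp (P x))).toLinearMap) ≤ 1)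

/-- Unitary equivalence of quantum walks: conjugation by a unitary `W`
preserving every `H_x`. -/
def UnitEquiv (U U' : H ≃ₗᵢ[ℂ] H) : Prop :=
  ∃ W : H ≃ₗᵢ[ℂ] H,
    (∀ x : ℤ, (Hx x).map (W.toLinearEquiv : H →ₗ[ℂ] H) = Hx x) ∧
    U' = (W.symm.trans U).trans W

/-- `V` is the quantum walk `U_{p,r,θ,κ}`: with `q_x = √(1-p_x²)` and
`s_x = √(1-r_x²)`, it sends `e^{iκ_x} r_x e₁ˣ + s_x e₂ˣ` to
`e^{iθ_x} p_x e₁ˣ + q_x e₂^{x+1}`, and `s_x e₁ˣ − e^{−iκ_x} r_x e₂ˣ` to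
`q_{x−1} e₁^{x−1} − e^{−iθ_{x−1}} p_{x−1} e₂ˣ`, for every `x ∈ ℤ`. -/
def IsUprtk (p r θ κ : ℤ → ℝ) (V : H ≃ₗᵢ[ℂ] H) : Prop :=
  ∀ x : ℤ,
    V ((Complex.exp (Complex.I * (κ x : ℂ)) * (r x : ℂ)) • e x 0
        + (Real.sqrt (1 - (r x) ^ 2) : ℂ) • e x 1)
      = (Complex.exp (Complex.I * (θ x : ℂ)) * (p x : ℂ)) • e x 0
        + (Real.sqrt (1 - (p x) ^ 2) : ℂ) • e (x + 1) 1 ∧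
    V ((Real.sqrt (1 - (r x) ^ 2) : ℂ) • e x 0
        - (Complex.exp (-(Complex.I * (κ x : ℂ))) * (r x : ℂ)) • e x 1)
      = (Real.sqrt (1 - (p (x - 1)) ^ 2) : ℂ) • e (x - 1) 0
        - (Complex.exp (-(Complex.I * (θ (x - 1) : ℂ))) * (p (x - 1) : ℂ)) • e x 1

/-- The normalization of the parameters `(p, r, θ, κ)` in Case (1):
(a) `p_x < 1` for all `x` (so `q_x ≠ 0`); (b) `θ_x = 0` when `p_x = 0` and
`κ_x = 0` when `r_x = 0`; (c) the gauge fixing: `κ_w = 0` at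
`w = min{x ≥ 0 : r_x ≠ 0}` if that set is nonempty; otherwise `κ_w = 0` at
`w = max{x ≤ −1 : r_x ≠ 0}` if nonempty; otherwise (`r ≡ 0`) `θ_w = 0` at
`w = min{x ≥ 0 : p_x ≠ 0}` if nonempty; otherwise `θ_w = 0` at
`w = max{x ≤ −1 : p_x ≠ 0}` if nonempty. -/
def NormalizedCaseOne (p r θ κ : ℤ → ℝ) : Prop :=
  (∀ x : ℤ, p x < 1) ∧
  (∀ x : ℤ, p x = 0 → θ x = 0) ∧
  (∀ x : ℤ, r x = 0 → κ x = 0) ∧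
  (∀ w : ℤ, IsLeast {x : ℤ | 0 ≤ x ∧ r x ≠ 0} w → κ w = 0) ∧
  ((∀ x : ℤ, 0 ≤ x → r x = 0) →
    ∀ w : ℤ, IsGreatest {x : ℤ | x ≤ -1 ∧ r x ≠ 0} w → κ w = 0) ∧
  ((∀ x : ℤ, r x = 0) →
    (∀ w : ℤ, IsLeast {x : ℤ | 0 ≤ x ∧ p x ≠ 0} w → θ w = 0) ∧
    ((∀ x : ℤ, 0 ≤ x → p x = 0) →
      ∀ w : ℤ, IsGreatest {x : ℤ | x ≤ -1 ∧ p x ≠ 0} w → θ w = 0))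

/-! ### Auxiliary material -/

open Complex

lemma inner_e (x y : ℤ) (i j : Fin 2) :
    (inner ℂ (e x i) (e y j) : ℂ) = if x = y ∧ i = j then 1 else 0 := by
  rw [e, e, lp.inner_single_left]
  by_cases h : (x, i) = (y, j)
  · rw [show ((x,i) : ℤ × Fin 2) = (y,j) from h, lp.single_apply_self]
    obtain ⟨h1, h2⟩ := Prod.mk.injEq .. ▸ h
    simp [h1, h2]
  · rw [lp.single_apply_ne _ _ _ h]
    have : ¬ (x = y ∧ i = j) := by simpa [Prod.ext_iff] using h
    simp [this]

lemma norm_e (x : ℤ) (i : Fin 2) : ‖e x i‖ = 1 := by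
  have := lp.norm_single (p := 2) (E := fun _ : ℤ × Fin 2 => ℂ)
    (by norm_num) (x, i) (1 : ℂ)
  simpa [e] using this

lemma e_mem_Hx (x : ℤ) (i : Fin 2) : e x i ∈ Hx x := by
  fin_cases i
  · exact Submodule.subset_span (Set.mem_insert _ _)
  · exact Submodule.subset_span (Set.mem_insert_of_mem _ rfl)

/-- `a_x = e^{iκ_x} r_x` -/
def Aa (κ r : ℤ → ℝ) (x : ℤ) : ℂ := Complex.exp (Complex.I * (κ x : ℂ)) * (r x : ℂ)
/-- `ā_x = e^{-iκ_x} r_x` -/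
def sAa (κ r : ℤ → ℝ) (x : ℤ) : ℂ := Complex.exp (-(Complex.I * (κ x : ℂ))) * (r x : ℂ)
/-- `s_x = √(1-r_x²)` as a complex number -/
def Ss (r : ℤ → ℝ) (x : ℤ) : ℂ := (Real.sqrt (1 - (r x) ^ 2) : ℂ)

lemma sAa_mul_Aa (κ r : ℤ → ℝ) (x : ℤ) : sAa κ r x * Aa κ r x = ((r x : ℂ))^2 := by
  rw [sAa, Aa]
  have h : Complex.exp (-(Complex.I * (κ x : ℂ))) * Complex.exp (Complex.I * (κ x : ℂ)) = 1 := by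
    rw [← Complex.exp_add, neg_add_cancel, Complex.exp_zero]
  calc Complex.exp (-(Complex.I * (κ x : ℂ))) * (r x : ℂ)
        * (Complex.exp (Complex.I * (κ x : ℂ)) * (r x : ℂ))
      = (Complex.exp (-(Complex.I * (κ x : ℂ))) * Complex.exp (Complex.I * (κ x : ℂ)))
        * ((r x : ℂ) * (r x : ℂ)) := by ring
    _ = ((r x : ℂ))^2 := by rw [h]; ring

lemma Ss_sq (r : ℤ → ℝ) (hr : ∀ x, r x ∈ Set.Icc (0:ℝ) 1) (x : ℤ) :
    Ss r x * Ss r x = 1 - ((r x : ℂ))^2 := by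
  rw [Ss, ← Complex.ofReal_mul, Real.mul_self_sqrt (by nlinarith [(hr x).1, (hr x).2])]
  push_cast; ring

lemma exp_negI_mul_exp (t : ℝ) :
    Complex.exp (-(Complex.I * (t : ℂ))) * Complex.exp (Complex.I * (t : ℂ)) = 1 := by
  rw [← Complex.exp_add, neg_add_cancel, Complex.exp_zero]

lemma abs_exp_I_mul (t : ℝ) : ‖Complex.exp (Complex.I * (t : ℂ))‖ = 1 := by
  rw [Complex.norm_exp]; simp

lemma abs_exp_neg_I_mul (t : ℝ) : ‖Complex.exp (-(Complex.I * (t : ℂ)))‖ = 1 := by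
  rw [Complex.norm_exp]; simp

lemma abs_Aa (κ r : ℤ → ℝ) (x : ℤ) (h : 0 ≤ r x) : ‖Aa κ r x‖ = r x := by
  rw [Aa, norm_mul, abs_exp_I_mul, Complex.norm_real, Real.norm_eq_abs, _root_.abs_of_nonneg h, one_mul]

lemma abs_sAa (κ r : ℤ → ℝ) (x : ℤ) (h : 0 ≤ r x) : ‖sAa κ r x‖ = r x := by
  rw [sAa, norm_mul, abs_exp_neg_I_mul, Complex.norm_real, Real.norm_eq_abs, _root_.abs_of_nonneg h, one_mul]

lemma abs_Ss (r : ℤ → ℝ) (x : ℤ) : ‖Ss r x‖ = Real.sqrt (1 - (r x) ^ 2) := by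
  rw [Ss, Complex.norm_real, Real.norm_eq_abs, _root_.abs_of_nonneg (Real.sqrt_nonneg _)]

lemma Ss_ne_zero_of_eq_zero (r : ℤ → ℝ) (x : ℤ) (h : r x = 0) : Ss r x = 1 := by
  rw [Ss, h]; norm_num

lemma exp_I_mul_inj {a b : ℝ} (ha : a ∈ Set.Ico 0 (2 * Real.pi))
    (hb : b ∈ Set.Ico 0 (2 * Real.pi))
    (h : Complex.exp (Complex.I * (a : ℂ)) = Complex.exp (Complex.I * (b : ℂ))) : a = b := by
  have h1 : Complex.exp (Complex.I * (a : ℂ) - Complex.I * (b : ℂ)) = 1 := by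
    rw [Complex.exp_sub, h, div_self (Complex.exp_ne_zero _)]
  rw [Complex.exp_eq_one_iff] at h1
  obtain ⟨n, hn⟩ := h1
  have h2 : a - b = (n : ℝ) * (2 * Real.pi) := by
    have h3 := mul_left_cancel₀ Complex.I_ne_zero
      (show Complex.I * ((a : ℂ) - b) = Complex.I * ((n : ℂ) * (2 * Real.pi)) by
        linear_combination hn)
    exact_mod_cast h3
  have hπ := Real.pi_pos
  have hn1 : (n : ℝ) < 1 := by nlinarith [ha.1, ha.2, hb.1, hb.2]
  have hn2 : (-1 : ℝ) < n := by nlinarith [ha.1, ha.2, hb.1, hb.2]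
  have : n = 0 := by
    have u1 : n < 1 := by exact_mod_cast hn1
    have u2 : -1 < n := by exact_mod_cast hn2
    omega
  rw [this] at h2
  simp at h2
  linarith

lemma V_apply (p r θ κ : ℤ → ℝ) (V : H ≃ₗᵢ[ℂ] H) (hV : IsUprtk p r θ κ V)
    (hr : ∀ x, r x ∈ Set.Icc (0:ℝ) 1) (x : ℤ) :
    V (e x 0) = (sAa κ r x * Aa θ p x) • e x 0
      - (Ss r x * sAa θ p (x-1)) • e x 1
      + (Ss r x * Ss p (x-1)) • e (x-1) 0
      + (sAa κ r x * Ss p x) • e (x+1) 1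
  ∧ V (e x 1) = (Ss r x * Aa θ p x) • e x 0
      + (Aa κ r x * sAa θ p (x-1)) • e x 1
      - (Aa κ r x * Ss p (x-1)) • e (x-1) 0
      + (Ss r x * Ss p x) • e (x+1) 1 := by
  obtain ⟨h1o, h2o⟩ := hV x
  have h1 : V (Aa κ r x • e x 0 + Ss r x • e x 1) = Aa θ p x • e x 0 + Ss p x • e (x+1) 1 := h1o
  have h2 : V (Ss r x • e x 0 - sAa κ r x • e x 1)
      = Ss p (x-1) • e (x-1) 0 - sAa θ p (x-1) • e x 1 := h2o
  have key : sAa κ r x * Aa κ r x + Ss r x * Ss r x = 1 := by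
    rw [sAa_mul_Aa, Ss_sq r hr]; ring
  constructor
  · have he0 : e x 0 = sAa κ r x • (Aa κ r x • e x 0 + Ss r x • e x 1)
        + Ss r x • (Ss r x • e x 0 - sAa κ r x • e x 1) := by
      calc e x 0 = (sAa κ r x * Aa κ r x + Ss r x * Ss r x) • e x 0 := by rw [key, one_smul]
        _ = _ := by module
    conv_lhs => rw [he0]
    rw [map_add, map_smul, map_smul, h1, h2]
    module
  · have he1 : e x 1 = Ss r x • (Aa κ r x • e x 0 + Ss r x • e x 1)
        - Aa κ r x • (Ss r x • e x 0 - sAa κ r x • e x 1) := by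
      calc e x 1 = (Aa κ r x * sAa κ r x + Ss r x * Ss r x) • e x 1 := by
            rw [show Aa κ r x * sAa κ r x = sAa κ r x * Aa κ r x by ring, key, one_smul]
        _ = _ := by module
    conv_lhs => rw [he1]
    rw [map_sub, map_smul, map_smul, h1, h2]
    module

lemma sAa_ne_zero (κ r : ℤ → ℝ) (x : ℤ) (h : r x ≠ 0) : sAa κ r x ≠ 0 := by
  simp only [sAa]
  exact mul_ne_zero (Complex.exp_ne_zero _) (Complex.ofReal_ne_zero.2 h)

lemma Aa_ne_zero (κ r : ℤ → ℝ) (x : ℤ) (h : r x ≠ 0) : Aa κ r x ≠ 0 := by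
  simp only [Aa]
  exact mul_ne_zero (Complex.exp_ne_zero _) (Complex.ofReal_ne_zero.2 h)

section Equations

variable (p r θ κ p' r' θ' κ' : ℤ → ℝ) (V V' W : H ≃ₗᵢ[ℂ] H) (α β γ δ : ℤ → ℂ)

lemma equationsAt
    (hr : ∀ x, r x ∈ Set.Icc (0:ℝ) 1) (hr' : ∀ x, r' x ∈ Set.Icc (0:ℝ) 1)
    (hV : IsUprtk p r θ κ V) (hV' : IsUprtk p' r' θ' κ' V')
    (key : ∀ ψ : H, V' (W ψ) = W (V ψ))
    (hW0 : ∀ x, W (e x 0) = α x • e x 0 + γ x • e x 1)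
    (hW1 : ∀ x, W (e x 1) = β x • e x 0 + δ x • e x 1)
    (x : ℤ) :
    (α x * (Ss r' x * Ss p' (x-1)) - γ x * (Aa κ' r' x * Ss p' (x-1))
        = Ss r x * Ss p (x-1) * α (x-1)) ∧
    (0 = Ss r x * Ss p (x-1) * γ (x-1)) ∧
    (α x * (sAa κ' r' x * Aa θ' p' x) + γ x * (Ss r' x * Aa θ' p' x)
        = sAa κ r x * Aa θ p x * α x - Ss r x * sAa θ p (x-1) * β x) ∧
    (-(α x * (Ss r' x * sAa θ' p' (x-1))) + γ x * (Aa κ' r' x * sAa θ' p' (x-1))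
        = sAa κ r x * Aa θ p x * γ x - Ss r x * sAa θ p (x-1) * δ x) ∧
    (0 = sAa κ r x * Ss p x * β (x+1)) ∧
    (α x * (sAa κ' r' x * Ss p' x) + γ x * (Ss r' x * Ss p' x)
        = sAa κ r x * Ss p x * δ (x+1)) ∧
    (β x * (Ss r' x * Ss p' (x-1)) - δ x * (Aa κ' r' x * Ss p' (x-1))
        = -(Aa κ r x * Ss p (x-1) * α (x-1))) ∧
    (0 = -(Aa κ r x * Ss p (x-1) * γ (x-1))) ∧
    (β x * (sAa κ' r' x * Aa θ' p' x) + δ x * (Ss r' x * Aa θ' p' x)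
        = Ss r x * Aa θ p x * α x + Aa κ r x * sAa θ p (x-1) * β x) ∧
    (-(β x * (Ss r' x * sAa θ' p' (x-1))) + δ x * (Aa κ' r' x * sAa θ' p' (x-1))
        = Ss r x * Aa θ p x * γ x + Aa κ r x * sAa θ p (x-1) * δ x) ∧
    (0 = Ss r x * Ss p x * β (x+1)) ∧
    (β x * (sAa κ' r' x * Ss p' x) + δ x * (Ss r' x * Ss p' x)
        = Ss r x * Ss p x * δ (x+1)) := by
  have hVx := V_apply p r θ κ V hV hr x
  have hV'x := V_apply p' r' θ' κ' V' hV' hr' x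
  have E0 := key (e x 0)
  have E1 := key (e x 1)
  rw [hVx.1] at E0
  rw [hVx.2] at E1
  simp only [map_add, map_sub, map_smul] at E0 E1
  rw [hW0 x, hW0 (x-1), hW1 x, hW1 (x+1)] at E0 E1
  simp only [map_add, map_smul] at E0 E1
  rw [hV'x.1, hV'x.2] at E0 E1
  have n1 : x - 1 ≠ x := by omega
  have n2 : x - 1 ≠ x + 1 := by omega
  have n3 : x ≠ x - 1 := by omega
  have n4 : x ≠ x + 1 := by omega
  have n5 : x + 1 ≠ x - 1 := by omega
  have n6 : x + 1 ≠ x := by omega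
  have f1 : (0 : Fin 2) ≠ 1 := by decide
  have f2 : (1 : Fin 2) ≠ 0 := by decide
  have P1 := congrArg (fun ψ : H => (inner ℂ (e (x-1) 0) ψ : ℂ)) E0
  have P2 := congrArg (fun ψ : H => (inner ℂ (e (x-1) 1) ψ : ℂ)) E0
  have P3 := congrArg (fun ψ : H => (inner ℂ (e x 0) ψ : ℂ)) E0
  have P4 := congrArg (fun ψ : H => (inner ℂ (e x 1) ψ : ℂ)) E0
  have P5 := congrArg (fun ψ : H => (inner ℂ (e (x+1) 0) ψ : ℂ)) E0
  have P6 := congrArg (fun ψ : H => (inner ℂ (e (x+1) 1) ψ : ℂ)) E0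
  have Q1 := congrArg (fun ψ : H => (inner ℂ (e (x-1) 0) ψ : ℂ)) E1
  have Q2 := congrArg (fun ψ : H => (inner ℂ (e (x-1) 1) ψ : ℂ)) E1
  have Q3 := congrArg (fun ψ : H => (inner ℂ (e x 0) ψ : ℂ)) E1
  have Q4 := congrArg (fun ψ : H => (inner ℂ (e x 1) ψ : ℂ)) E1
  have Q5 := congrArg (fun ψ : H => (inner ℂ (e (x+1) 0) ψ : ℂ)) E1
  have Q6 := congrArg (fun ψ : H => (inner ℂ (e (x+1) 1) ψ : ℂ)) E1
  simp only [inner_add_right, inner_sub_right, inner_smul_right, inner_e,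
    n1, n2, n3, n4, n5, n6, f1, f2, if_true, if_false, and_true, true_and, and_false,
    false_and, and_self, if_neg, not_false_iff, eq_self_iff_true,
    mul_one, mul_zero, add_zero, zero_add, sub_zero, zero_sub, neg_zero, neg_neg]
    at P1 P2 P3 P4 P5 P6 Q1 Q2 Q3 Q4 Q5 Q6
  refine ⟨by linear_combination P1, by linear_combination P2, by linear_combination P3,
    by linear_combination P4, by linear_combination P5, by linear_combination P6,
    by linear_combination Q1, by linear_combination Q2, by linear_combination Q3,
    by linear_combination Q4, by linear_combination Q5, by linear_combination Q6⟩

end Equations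


set_option maxHeartbeats 1600000

/-- **Theorem 3.4, Case (1).** For normalized parameter
families, `U_{p,r,θ,κ}` and `U_{p′,r′,θ′,κ′}` are unitarily equivalent iff
`p = p′`, `r = r′`, `θ = θ′` and `κ = κ′`. -/
theorem unitary_equiv_iff_case_one (p p' r r' θ θ' κ κ' : ℤ → ℝ)
    (hp : ∀ x : ℤ, p x ∈ Set.Icc (0 : ℝ) 1) (hp' : ∀ x : ℤ, p' x ∈ Set.Icc (0 : ℝ) 1)
    (hr : ∀ x : ℤ, r x ∈ Set.Icc (0 : ℝ) 1) (hr' : ∀ x : ℤ, r' x ∈ Set.Icc (0 : ℝ) 1)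
    (hθ : ∀ x : ℤ, θ x ∈ Set.Ico (0 : ℝ) (2 * Real.pi))
    (hθ' : ∀ x : ℤ, θ' x ∈ Set.Ico (0 : ℝ) (2 * Real.pi))
    (hκ : ∀ x : ℤ, κ x ∈ Set.Ico (0 : ℝ) (2 * Real.pi))
    (hκ' : ∀ x : ℤ, κ' x ∈ Set.Ico (0 : ℝ) (2 * Real.pi))
    (hN : NormalizedCaseOne p r θ κ) (hN' : NormalizedCaseOne p' r' θ' κ')
    (V V' : H ≃ₗᵢ[ℂ] H)
    (hV : IsUprtk p r θ κ V) (hV' : IsUprtk p' r' θ' κ' V') :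
    UnitEquiv V V' ↔ (p = p' ∧ r = r' ∧ θ = θ' ∧ κ = κ') := by
  constructor
  · rintro ⟨W, hWmap, hWeq⟩
    classical
    have key : ∀ ψ : H, V' (W ψ) = W (V ψ) := by
      intro ψ
      rw [hWeq]
      simp [LinearIsometryEquiv.trans_apply]
    have hWin : ∀ (x : ℤ) (i : Fin 2), ∃ c d : ℂ, W (e x i) = c • e x 0 + d • e x 1 := by
      intro x i
      have hmem : W (e x i) ∈ Hx x := by
        rw [← hWmap x]
        exact ⟨e x i, e_mem_Hx x i, rfl⟩
      rw [Hx, Submodule.mem_span_pair] at hmem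
      obtain ⟨c, d, hcd⟩ := hmem
      exact ⟨c, d, hcd.symm⟩
    choose C D hCD using hWin
    have Eq := fun x : ℤ => equationsAt p r θ κ p' r' θ' κ' V V' W
      (fun x => C x 0) (fun x => C x 1) (fun x => D x 0) (fun x => D x 1)
      hr hr' hV hV' key (fun x => hCD x 0) (fun x => hCD x 1) x
    have hqpos : ∀ x : ℤ, (0:ℝ) < Real.sqrt (1 - p x ^ 2) := fun x =>
      Real.sqrt_pos.2 (by nlinarith [(hp x).1, hN.1 x])
    have hqpos' : ∀ x : ℤ, (0:ℝ) < Real.sqrt (1 - p' x ^ 2) := fun x =>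
      Real.sqrt_pos.2 (by nlinarith [(hp' x).1, hN'.1 x])
    have hSp : ∀ x : ℤ, Ss p x ≠ 0 := fun x => by
      rw [Ss]; exact Complex.ofReal_ne_zero.2 (ne_of_gt (hqpos x))
    have hSp' : ∀ x : ℤ, Ss p' x ≠ 0 := fun x => by
      rw [Ss]; exact Complex.ofReal_ne_zero.2 (ne_of_gt (hqpos' x))
    -- β ≡ 0
    have hβ : ∀ y : ℤ, C y 1 = 0 := by
      intro y
      have h14 := (Eq (y-1)).2.2.2.2.1
      have h24 := (Eq (y-1)).2.2.2.2.2.2.2.2.2.2.1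
      rw [show y - 1 + 1 = y by omega] at h14 h24
      by_cases hr0 : r (y-1) = 0
      · rw [Ss_ne_zero_of_eq_zero r _ hr0, one_mul] at h24
        exact ((mul_eq_zero.1 h24.symm).resolve_left (hSp (y-1)))
      · have hne : sAa κ r (y-1) * Ss p (y-1) ≠ 0 :=
          mul_ne_zero (sAa_ne_zero κ r (y-1) hr0) (hSp (y-1))
        exact ((mul_eq_zero.1 h14.symm).resolve_left hne)
    -- γ ≡ 0
    have hγ : ∀ y : ℤ, D y 0 = 0 := by
      intro y
      have h11 := (Eq (y+1)).2.1
      have h21 := (Eq (y+1)).2.2.2.2.2.2.2.1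
      rw [show y + 1 - 1 = y by omega] at h11 h21
      by_cases hr0 : r (y+1) = 0
      · rw [Ss_ne_zero_of_eq_zero r _ hr0, one_mul] at h11
        exact ((mul_eq_zero.1 h11.symm).resolve_left (hSp y))
      · have h21' : Aa κ r (y+1) * Ss p y * D y 0 = 0 := by linear_combination h21
        have hne : Aa κ r (y+1) * Ss p y ≠ 0 :=
          mul_ne_zero (Aa_ne_zero κ r (y+1) hr0) (hSp y)
        exact ((mul_eq_zero.1 h21').resolve_left hne)
    -- cleaned equations
    have c1 : ∀ x : ℤ, C x 0 * (sAa κ' r' x * Aa θ' p' x) = sAa κ r x * Aa θ p x * C x 0 := by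
      intro x
      have h := (Eq x).2.2.1
      simp only [hβ, hγ, mul_zero, zero_mul, add_zero, zero_add, sub_zero, neg_zero] at h
      linear_combination h
    have c2 : ∀ x : ℤ, C x 0 * (sAa κ' r' x * Ss p' x) = sAa κ r x * Ss p x * D (x+1) 1 := by
      intro x
      have h := (Eq x).2.2.2.2.2.1
      simp only [hβ, hγ, mul_zero, zero_mul, add_zero, zero_add, sub_zero, neg_zero] at h
      linear_combination h
    have c3 : ∀ x : ℤ, C x 0 * (Ss r' x * Ss p' (x-1)) = Ss r x * Ss p (x-1) * C (x-1) 0 := by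
      intro x
      have h := (Eq x).1
      simp only [hβ, hγ, mul_zero, zero_mul, add_zero, zero_add, sub_zero, neg_zero] at h
      linear_combination h
    have c4 : ∀ x : ℤ, C x 0 * (Ss r' x * sAa θ' p' (x-1)) = Ss r x * sAa θ p (x-1) * D x 1 := by
      intro x
      have h := (Eq x).2.2.2.1
      simp only [hβ, hγ, mul_zero, zero_mul, add_zero, zero_add, sub_zero, neg_zero] at h
      linear_combination -h
    have c5 : ∀ x : ℤ, D x 1 * (Ss r' x * Aa θ' p' x) = Ss r x * Aa θ p x * C x 0 := by
      intro x
      have h := (Eq x).2.2.2.2.2.2.2.2.1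
      simp only [hβ, hγ, mul_zero, zero_mul, add_zero, zero_add, sub_zero, neg_zero] at h
      linear_combination h
    have c6 : ∀ x : ℤ, D x 1 * (Ss r' x * Ss p' x) = Ss r x * Ss p x * D (x+1) 1 := by
      intro x
      have h := (Eq x).2.2.2.2.2.2.2.2.2.2.2
      simp only [hβ, hγ, mul_zero, zero_mul, add_zero, zero_add, sub_zero, neg_zero] at h
      linear_combination h
    have c7 : ∀ x : ℤ, D x 1 * (Aa κ' r' x * Ss p' (x-1)) = Aa κ r x * Ss p (x-1) * C (x-1) 0 := by
      intro x
      have h := (Eq x).2.2.2.2.2.2.1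
      simp only [hβ, hγ, mul_zero, zero_mul, add_zero, zero_add, sub_zero, neg_zero] at h
      linear_combination -h
    have c8 : ∀ x : ℤ, D x 1 * (Aa κ' r' x * sAa θ' p' (x-1)) = Aa κ r x * sAa θ p (x-1) * D x 1 := by
      intro x
      have h := (Eq x).2.2.2.2.2.2.2.2.2.1
      simp only [hβ, hγ, mul_zero, zero_mul, add_zero, zero_add, sub_zero, neg_zero] at h
      linear_combination h
    -- norms
    have habsα : ∀ x : ℤ, ‖C x 0‖ = 1 := by
      intro x
      have h := hCD x 0
      rw [hγ x, zero_smul, add_zero] at h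
      have hn : ‖W (e x 0)‖ = 1 := by rw [LinearIsometryEquiv.norm_map, norm_e]
      rw [h, norm_smul, norm_e, mul_one] at hn
      exact hn
    have habsδ : ∀ x : ℤ, ‖D x 1‖ = 1 := by
      intro x
      have h := hCD x 1
      rw [hβ x, zero_smul, zero_add] at h
      have hn : ‖W (e x 1)‖ = 1 := by rw [LinearIsometryEquiv.norm_map, norm_e]
      rw [h, norm_smul, norm_e, mul_one] at hn
      exact hn
    -- p = p' and r = r'
    have hPR : ∀ x : ℤ, p x = p' x ∧ r x = r' x := by
      intro x
      have h2 := congrArg (fun z : ℂ => ‖z‖) (c2 x)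
      simp only [norm_mul, habsα, habsδ, abs_Ss, abs_sAa κ' r' x (hr' x).1,
        abs_sAa κ r x (hr x).1, one_mul, mul_one] at h2
      have h6 := congrArg (fun z : ℂ => ‖z‖) (c6 x)
      simp only [norm_mul, habsα, habsδ, abs_Ss, one_mul, mul_one] at h6
      have hs : Real.sqrt (1 - r x ^ 2) ^ 2 = 1 - r x ^ 2 :=
        Real.sq_sqrt (by nlinarith [(hr x).1, (hr x).2])
      have hs' : Real.sqrt (1 - r' x ^ 2) ^ 2 = 1 - r' x ^ 2 :=
        Real.sq_sqrt (by nlinarith [(hr' x).1, (hr' x).2])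
      have expand : Real.sqrt (1 - p x ^ 2) ^ 2
          = (r x * Real.sqrt (1 - p x ^ 2)) ^ 2
            + (Real.sqrt (1 - r x ^ 2) * Real.sqrt (1 - p x ^ 2)) ^ 2 := by
        rw [mul_pow, mul_pow, hs]; ring
      have expand' : Real.sqrt (1 - p' x ^ 2) ^ 2
          = (r' x * Real.sqrt (1 - p' x ^ 2)) ^ 2
            + (Real.sqrt (1 - r' x ^ 2) * Real.sqrt (1 - p' x ^ 2)) ^ 2 := by
        rw [mul_pow, mul_pow, hs']; ring
      have key2 : Real.sqrt (1 - p' x ^ 2) ^ 2 = Real.sqrt (1 - p x ^ 2) ^ 2 := by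
        rw [expand', h2, h6, ← expand]
      have hqq : Real.sqrt (1 - p' x ^ 2) = Real.sqrt (1 - p x ^ 2) := by
        rw [← Real.sqrt_sq (le_of_lt (hqpos' x)), ← Real.sqrt_sq (le_of_lt (hqpos x)), key2]
      have hqx : Real.sqrt (1 - p x ^ 2) ^ 2 = 1 - p x ^ 2 :=
        Real.sq_sqrt (by nlinarith [(hp x).1, (hp x).2])
      have hqx' : Real.sqrt (1 - p' x ^ 2) ^ 2 = 1 - p' x ^ 2 :=
        Real.sq_sqrt (by nlinarith [(hp' x).1, (hp' x).2])
      have hpsq : p x ^ 2 = p' x ^ 2 := by nlinarith [key2, hqx, hqx']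
      constructor
      · rw [← Real.sqrt_sq (hp x).1, ← Real.sqrt_sq (hp' x).1, hpsq]
      · have := h2
        rw [hqq] at this
        exact (mul_right_cancel₀ (ne_of_gt (hqpos x)) this).symm
    have hP : p = p' := funext fun x => (hPR x).1
    have hR : r = r' := funext fun x => (hPR x).2
    subst hP
    subst hR
    -- nonvanishing of the diagonal unitary coefficients
    have hαne : ∀ x : ℤ, C x 0 ≠ 0 := by
      intro x h0
      have := habsα x
      rw [h0] at this
      simp at this
    have hδne : ∀ x : ℤ, D x 1 ≠ 0 := by
      intro x h0
      have := habsδ x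
      rw [h0] at this
      simp at this
    -- reduced phase relations
    have redκ : ∀ x : ℤ, r x ≠ 0 →
        C x 0 * Complex.exp (-(Complex.I * (κ' x : ℂ)))
          = Complex.exp (-(Complex.I * (κ x : ℂ))) * D (x+1) 1 := by
      intro x hrx
      have h := c2 x
      simp only [sAa] at h
      have hmul : (C x 0 * Complex.exp (-(Complex.I * (κ' x : ℂ)))) * ((r x : ℂ) * Ss p x)
          = (Complex.exp (-(Complex.I * (κ x : ℂ))) * D (x+1) 1) * ((r x : ℂ) * Ss p x) := by
        linear_combination h
      exact mul_right_cancel₀ (mul_ne_zero (Complex.ofReal_ne_zero.2 hrx) (hSp x)) hmul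
    have redκ2 : ∀ x : ℤ, r x ≠ 0 →
        D x 1 * Complex.exp (Complex.I * (κ' x : ℂ))
          = Complex.exp (Complex.I * (κ x : ℂ)) * C (x-1) 0 := by
      intro x hrx
      have h := c7 x
      simp only [Aa] at h
      have hmul : (D x 1 * Complex.exp (Complex.I * (κ' x : ℂ))) * ((r x : ℂ) * Ss p (x-1))
          = (Complex.exp (Complex.I * (κ x : ℂ)) * C (x-1) 0) * ((r x : ℂ) * Ss p (x-1)) := by
        linear_combination h
      exact mul_right_cancel₀ (mul_ne_zero (Complex.ofReal_ne_zero.2 hrx) (hSp (x-1))) hmul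
    have stepsame : ∀ x : ℤ, r x = 0 → D (x+1) 1 = D x 1 ∧ C (x-1) 0 = C x 0 := by
      intro x hrx
      constructor
      · have h := c6 x
        rw [Ss_ne_zero_of_eq_zero r x hrx, one_mul] at h
        exact (mul_left_cancel₀ (hSp x) (by linear_combination h)).symm
      · have h := c3 x
        rw [Ss_ne_zero_of_eq_zero r x hrx, one_mul] at h
        exact (mul_left_cancel₀ (hSp (x-1)) (by linear_combination h)).symm
    have step : ∀ x : ℤ, D (x+1) 1 * C (x-1) 0 = D x 1 * C x 0 := by
      intro x
      by_cases hrx : r x = 0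
      · obtain ⟨hd, hc⟩ := stepsame x hrx
        rw [hd, hc]
      · have h1 := redκ x hrx
        have h2 := redκ2 x hrx
        have hi := exp_negI_mul_exp (κ x)
        have hi' := exp_negI_mul_exp (κ' x)
        have hd : D (x+1) 1 = C x 0 * Complex.exp (-(Complex.I * (κ' x : ℂ)))
            * Complex.exp (Complex.I * (κ x : ℂ)) := by
          calc D (x+1) 1
              = (Complex.exp (-(Complex.I * (κ x : ℂ))) * Complex.exp (Complex.I * (κ x : ℂ)))
                * D (x+1) 1 := by rw [hi]; ring
            _ = _ := by linear_combination -Complex.exp (Complex.I * (κ x : ℂ)) * h1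
        have hc : C (x-1) 0 = D x 1 * Complex.exp (Complex.I * (κ' x : ℂ))
            * Complex.exp (-(Complex.I * (κ x : ℂ))) := by
          calc C (x-1) 0
              = (Complex.exp (-(Complex.I * (κ x : ℂ))) * Complex.exp (Complex.I * (κ x : ℂ)))
                * C (x-1) 0 := by rw [hi]; ring
            _ = _ := by linear_combination -Complex.exp (-(Complex.I * (κ x : ℂ))) * h2
        rw [hd, hc]
        calc C x 0 * Complex.exp (-(Complex.I * (κ' x : ℂ))) * Complex.exp (Complex.I * (κ x : ℂ))
              * (D x 1 * Complex.exp (Complex.I * (κ' x : ℂ)) * Complex.exp (-(Complex.I * (κ x : ℂ))))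
            = (D x 1 * C x 0) * ((Complex.exp (-(Complex.I * (κ' x : ℂ))) * Complex.exp (Complex.I * (κ' x : ℂ)))
                * (Complex.exp (-(Complex.I * (κ x : ℂ))) * Complex.exp (Complex.I * (κ x : ℂ)))) := by ring
          _ = D x 1 * C x 0 := by rw [hi, hi']; ring
    have frel : ∀ x : ℤ, D (x+1) 1 * (C x 0)⁻¹ = D x 1 * (C (x-1) 0)⁻¹ := by
      intro x
      rw [inv_eq_one_div, inv_eq_one_div, mul_one_div, mul_one_div,
        div_eq_div_iff (hαne x) (hαne (x-1))]
      linear_combination step x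
    have Tconst : ∀ x : ℤ, D (x+1) 1 * (C x 0)⁻¹ = D (0+1) 1 * (C 0 0)⁻¹ := by
      intro x
      induction x using Int.induction_on with
      | zero => rfl
      | succ n ih =>
        have h := frel ((n : ℤ) + 1)
        rw [show (n : ℤ) + 1 - 1 = (n : ℤ) by omega] at h
        rw [h]
        exact ih
      | pred n ih =>
        have h := frel (-(n : ℤ))
        rw [show (-(n : ℤ) - 1) + 1 = -(n : ℤ) by omega]
        rw [← h]
        exact ih
    have claimκ : ∀ x : ℤ, r x ≠ 0 →
        Complex.exp (Complex.I * (κ x : ℂ))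
          = (D (0+1) 1 * (C 0 0)⁻¹) * Complex.exp (Complex.I * (κ' x : ℂ)) := by
      intro x hrx
      have h1 := redκ x hrx
      have hi := exp_negI_mul_exp (κ x)
      have hi' := exp_negI_mul_exp (κ' x)
      have h2 : Complex.exp (Complex.I * (κ x : ℂ)) * C x 0
          = D (x+1) 1 * Complex.exp (Complex.I * (κ' x : ℂ)) := by
        calc Complex.exp (Complex.I * (κ x : ℂ)) * C x 0
            = (Complex.exp (Complex.I * (κ x : ℂ)) * C x 0)
              * (Complex.exp (-(Complex.I * (κ' x : ℂ))) * Complex.exp (Complex.I * (κ' x : ℂ))) := by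
              rw [hi']; ring
          _ = Complex.exp (Complex.I * (κ x : ℂ))
              * (C x 0 * Complex.exp (-(Complex.I * (κ' x : ℂ))))
              * Complex.exp (Complex.I * (κ' x : ℂ)) := by ring
          _ = Complex.exp (Complex.I * (κ x : ℂ))
              * (Complex.exp (-(Complex.I * (κ x : ℂ))) * D (x+1) 1)
              * Complex.exp (Complex.I * (κ' x : ℂ)) := by rw [h1]
          _ = ((Complex.exp (-(Complex.I * (κ x : ℂ))) * Complex.exp (Complex.I * (κ x : ℂ))))
              * D (x+1) 1 * Complex.exp (Complex.I * (κ' x : ℂ)) := by ring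
          _ = D (x+1) 1 * Complex.exp (Complex.I * (κ' x : ℂ)) := by rw [hi]; ring
      calc Complex.exp (Complex.I * (κ x : ℂ))
          = (Complex.exp (Complex.I * (κ x : ℂ)) * C x 0) * (C x 0)⁻¹ := by
            rw [mul_assoc, mul_inv_cancel₀ (hαne x), mul_one]
        _ = (D (x+1) 1 * Complex.exp (Complex.I * (κ' x : ℂ))) * (C x 0)⁻¹ := by rw [h2]
        _ = (D (x+1) 1 * (C x 0)⁻¹) * Complex.exp (Complex.I * (κ' x : ℂ)) := by ring
        _ = _ := by rw [Tconst x]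
    have claimθ : ∀ x : ℤ, p x ≠ 0 →
        Complex.exp (Complex.I * (θ x : ℂ))
          = (D (0+1) 1 * (C 0 0)⁻¹) * Complex.exp (Complex.I * (θ' x : ℂ)) := by
      intro x hpx
      by_cases hrx : r x = 0
      · have h5 := c5 x
        rw [Ss_ne_zero_of_eq_zero r x hrx, one_mul, one_mul] at h5
        simp only [Aa] at h5
        have hcan : D x 1 * Complex.exp (Complex.I * (θ' x : ℂ))
            = Complex.exp (Complex.I * (θ x : ℂ)) * C x 0 := by
          have hmul : (D x 1 * Complex.exp (Complex.I * (θ' x : ℂ))) * (p x : ℂ)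
              = (Complex.exp (Complex.I * (θ x : ℂ)) * C x 0) * (p x : ℂ) := by
            linear_combination h5
          exact mul_right_cancel₀ (Complex.ofReal_ne_zero.2 hpx) hmul
        have hTx := Tconst x
        rw [(stepsame x hrx).1] at hTx
        calc Complex.exp (Complex.I * (θ x : ℂ))
            = (Complex.exp (Complex.I * (θ x : ℂ)) * C x 0) * (C x 0)⁻¹ := by
              rw [mul_assoc, mul_inv_cancel₀ (hαne x), mul_one]
          _ = (D x 1 * Complex.exp (Complex.I * (θ' x : ℂ))) * (C x 0)⁻¹ := by rw [hcan]
          _ = (D x 1 * (C x 0)⁻¹) * Complex.exp (Complex.I * (θ' x : ℂ)) := by ring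
          _ = _ := by rw [hTx]
      · have h1 := c1 x
        simp only [sAa, Aa] at h1
        have hkey : Complex.exp (-(Complex.I * (κ' x : ℂ))) * Complex.exp (Complex.I * (θ' x : ℂ))
            = Complex.exp (-(Complex.I * (κ x : ℂ))) * Complex.exp (Complex.I * (θ x : ℂ)) := by
          have hmul : (Complex.exp (-(Complex.I * (κ' x : ℂ))) * Complex.exp (Complex.I * (θ' x : ℂ)))
                * (C x 0 * ((r x : ℂ) * (p x : ℂ)))
              = (Complex.exp (-(Complex.I * (κ x : ℂ))) * Complex.exp (Complex.I * (θ x : ℂ)))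
                * (C x 0 * ((r x : ℂ) * (p x : ℂ))) := by
            linear_combination h1
          exact mul_right_cancel₀ (mul_ne_zero (hαne x)
            (mul_ne_zero (Complex.ofReal_ne_zero.2 hrx) (Complex.ofReal_ne_zero.2 hpx))) hmul
        have hκx := claimκ x hrx
        calc Complex.exp (Complex.I * (θ x : ℂ))
            = Complex.exp (Complex.I * (κ x : ℂ))
              * (Complex.exp (-(Complex.I * (κ x : ℂ))) * Complex.exp (Complex.I * (θ x : ℂ))) := by
              rw [show Complex.exp (Complex.I * (κ x : ℂ))
                  * (Complex.exp (-(Complex.I * (κ x : ℂ))) * Complex.exp (Complex.I * (θ x : ℂ)))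
                  = (Complex.exp (-(Complex.I * (κ x : ℂ))) * Complex.exp (Complex.I * (κ x : ℂ)))
                    * Complex.exp (Complex.I * (θ x : ℂ)) by ring, exp_negI_mul_exp, one_mul]
          _ = Complex.exp (Complex.I * (κ x : ℂ))
              * (Complex.exp (-(Complex.I * (κ' x : ℂ))) * Complex.exp (Complex.I * (θ' x : ℂ))) := by
              rw [hkey]
          _ = ((D (0+1) 1 * (C 0 0)⁻¹) * Complex.exp (Complex.I * (κ' x : ℂ)))
              * (Complex.exp (-(Complex.I * (κ' x : ℂ))) * Complex.exp (Complex.I * (θ' x : ℂ))) := by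
              rw [← hκx]
          _ = (D (0+1) 1 * (C 0 0)⁻¹)
              * ((Complex.exp (-(Complex.I * (κ' x : ℂ))) * Complex.exp (Complex.I * (κ' x : ℂ)))
                * Complex.exp (Complex.I * (θ' x : ℂ))) := by ring
          _ = _ := by rw [exp_negI_mul_exp, one_mul]
    have hfinal : θ = θ' ∧ κ = κ' := by
      by_cases hrany : ∃ x, r x ≠ 0
      · have hT1 : D (0+1) 1 * (C 0 0)⁻¹ = 1 := by
          by_cases h0 : ∃ x : ℤ, 0 ≤ x ∧ r x ≠ 0
          · obtain ⟨w, hw, hmin⟩ := Int.exists_least_of_bdd ⟨0, fun z hz => hz.1⟩ h0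
            have hκw : κ w = 0 := hN.2.2.2.1 w ⟨hw, fun z hz => hmin z hz⟩
            have hκ'w : κ' w = 0 := hN'.2.2.2.1 w ⟨hw, fun z hz => hmin z hz⟩
            have hcl := claimκ w hw.2
            rw [hκw, hκ'w] at hcl
            simpa using hcl.symm
          · push_neg at h0
            obtain ⟨x₀, hx₀⟩ := hrany
            have hx₀le : x₀ ≤ -1 := by
              by_contra hc
              push_neg at hc
              exact hx₀ (h0 x₀ (by omega))
            obtain ⟨w, hw, hmax⟩ := Int.exists_greatest_of_bdd
              (P := fun z : ℤ => z ≤ -1 ∧ r z ≠ 0) ⟨-1, fun z hz => hz.1⟩ ⟨x₀, hx₀le, hx₀⟩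
            have hκw : κ w = 0 := hN.2.2.2.2.1 h0 w ⟨hw, fun z hz => hmax z hz⟩
            have hκ'w : κ' w = 0 := hN'.2.2.2.2.1 h0 w ⟨hw, fun z hz => hmax z hz⟩
            have hcl := claimκ w hw.2
            rw [hκw, hκ'w] at hcl
            simpa using hcl.symm
        constructor
        · funext x
          by_cases hpx : p x = 0
          · rw [hN.2.1 x hpx, hN'.2.1 x hpx]
          · exact exp_I_mul_inj (hθ x) (hθ' x) (by rw [claimθ x hpx, hT1, one_mul])
        · funext x
          by_cases hrx : r x = 0
          · rw [hN.2.2.1 x hrx, hN'.2.2.1 x hrx]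
          · exact exp_I_mul_inj (hκ x) (hκ' x) (by rw [claimκ x hrx, hT1, one_mul])
      · push_neg at hrany
        have hκeq : κ = κ' := funext fun x => by
          rw [hN.2.2.1 x (hrany x), hN'.2.2.1 x (hrany x)]
        by_cases hpany : ∃ x, p x ≠ 0
        · have hT1 : D (0+1) 1 * (C 0 0)⁻¹ = 1 := by
            by_cases h0 : ∃ x : ℤ, 0 ≤ x ∧ p x ≠ 0
            · obtain ⟨w, hw, hmin⟩ := Int.exists_least_of_bdd ⟨0, fun z hz => hz.1⟩ h0
              have hθw : θ w = 0 := (hN.2.2.2.2.2 hrany).1 w ⟨hw, fun z hz => hmin z hz⟩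
              have hθ'w : θ' w = 0 := (hN'.2.2.2.2.2 hrany).1 w ⟨hw, fun z hz => hmin z hz⟩
              have hcl := claimθ w hw.2
              rw [hθw, hθ'w] at hcl
              simpa using hcl.symm
            · push_neg at h0
              obtain ⟨x₀, hx₀⟩ := hpany
              have hx₀le : x₀ ≤ -1 := by
                by_contra hc
                push_neg at hc
                exact hx₀ (h0 x₀ (by omega))
              obtain ⟨w, hw, hmax⟩ := Int.exists_greatest_of_bdd
                (P := fun z : ℤ => z ≤ -1 ∧ p z ≠ 0) ⟨-1, fun z hz => hz.1⟩ ⟨x₀, hx₀le, hx₀⟩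
              have hθw : θ w = 0 := (hN.2.2.2.2.2 hrany).2 h0 w ⟨hw, fun z hz => hmax z hz⟩
              have hθ'w : θ' w = 0 := (hN'.2.2.2.2.2 hrany).2 h0 w ⟨hw, fun z hz => hmax z hz⟩
              have hcl := claimθ w hw.2
              rw [hθw, hθ'w] at hcl
              simpa using hcl.symm
          refine ⟨funext fun x => ?_, hκeq⟩
          by_cases hpx : p x = 0
          · rw [hN.2.1 x hpx, hN'.2.1 x hpx]
          · exact exp_I_mul_inj (hθ x) (hθ' x) (by rw [claimθ x hpx, hT1, one_mul])
        · push_neg at hpany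
          exact ⟨funext fun x => by rw [hN.2.1 x (hpany x), hN'.2.1 x (hpany x)], hκeq⟩
    exact ⟨rfl, rfl, hfinal.1, hfinal.2⟩
  · rintro ⟨hP, hR, hΘ, hΚ⟩
    subst hP
    subst hR
    subst hΘ
    subst hΚ
    have hVV : V = V' := by
      apply LinearIsometryEquiv.ext
      intro ψ
      have hs := lp.hasSum_single (E := fun _ : ℤ × Fin 2 => ℂ) (p := 2) (by norm_num) ψ
      have h1 : ∀ z : ℤ × Fin 2, V (lp.single 2 z (ψ z)) = V' (lp.single 2 z (ψ z)) := by
        rintro ⟨x, i⟩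
        have hsingle : (lp.single 2 ((x,i) : ℤ × Fin 2) (ψ (x,i)) : H) = ψ (x,i) • e x i := by
          rw [e, ← lp.single_smul]
          norm_num
        rw [hsingle, map_smul, map_smul]
        congr 1
        fin_cases i
        · show V (e x 0) = V' (e x 0)
          rw [(V_apply p r θ κ V hV hr x).1, (V_apply p r θ κ V' hV' hr x).1]
        · show V (e x 1) = V' (e x 1)
          rw [(V_apply p r θ κ V hV hr x).2, (V_apply p r θ κ V' hV' hr x).2]
      have hsV : HasSum (fun z : ℤ × Fin 2 => V (lp.single 2 z (ψ z))) (V ψ) :=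
        (clm V).hasSum hs
      have hsV' : HasSum (fun z : ℤ × Fin 2 => V' (lp.single 2 z (ψ z))) (V' ψ) :=
        (clm V').hasSum hs
      rw [funext h1] at hsV
      exact hsV.unique hsV'
    refine ⟨LinearIsometryEquiv.refl ℂ H, fun x => ?_, ?_⟩
    · have hid : (((LinearIsometryEquiv.refl ℂ H).toLinearEquiv : H ≃ₗ[ℂ] H) : H →ₗ[ℂ] H)
          = LinearMap.id := rfl
      rw [hid, Submodule.map_id]
    · apply LinearIsometryEquiv.ext
      intro ψ
      rw [← hVV]
      rfl
end
end

section
/- For all sequences p, r : ℤ → [0,1], the quantum walk U_{p,r,θ,κ} with θ_x = κ_x = 0 for all x ∈ ℤ (i.e., U_{p,r,0,0}) has chiral symmetry: there exists a self-adjoint unitary operator Γ on H such that Γ U_{p,r,0,0} Γ = (U_{p,r,0,0})*. -/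
noncomputable section

namespace Chiral

open scoped ENNReal

def sc (r : ℤ → ℝ) (x : ℤ) : ℝ := Real.sqrt (1 - r x ^ 2)

lemma sc_nonneg (r : ℤ → ℝ) (x : ℤ) : 0 ≤ sc r x := Real.sqrt_nonneg _

lemma sc_le_one (r : ℤ → ℝ) (x : ℤ) : sc r x ≤ 1 := by
  have h : (1 : ℝ) - r x ^ 2 ≤ 1 := by nlinarith [sq_nonneg (r x)]
  calc Real.sqrt (1 - r x ^ 2) ≤ Real.sqrt 1 := Real.sqrt_le_sqrt h
  _ = 1 := Real.sqrt_one

lemma sc_sq (r : ℤ → ℝ) (hr : ∀ x, r x ∈ Set.Icc (0:ℝ) 1) (x : ℤ) :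
    r x ^ 2 + sc r x ^ 2 = 1 := by
  have h1 : (0:ℝ) ≤ 1 - r x ^ 2 := by nlinarith [(hr x).1, (hr x).2]
  rw [sc, Real.sq_sqrt h1]; ring

def Cfun (r : ℤ → ℝ) (f : ℤ × Fin 2 → ℂ) : ℤ × Fin 2 → ℂ := fun q =>
  if q.2 = 0 then (r q.1 : ℂ) * f (q.1, 0) + (sc r q.1 : ℂ) * f (q.1, 1)
  else (sc r q.1 : ℂ) * f (q.1, 0) - (r q.1 : ℂ) * f (q.1, 1)

lemma norm_Cfun_le (r : ℤ → ℝ) (hr : ∀ x, r x ∈ Set.Icc (0:ℝ) 1)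
    (f : ℤ × Fin 2 → ℂ) (q : ℤ × Fin 2) :
    ‖Cfun r f q‖ ≤ ‖f (q.1, 0)‖ + ‖f (q.1, 1)‖ := by
  have hra : ‖((r q.1 : ℝ) : ℂ)‖ ≤ 1 := by
    rw [Complex.norm_real, Real.norm_eq_abs, abs_le]
    exact ⟨by linarith [(hr q.1).1], (hr q.1).2⟩
  have hsa : ‖((sc r q.1 : ℝ) : ℂ)‖ ≤ 1 := by
    rw [Complex.norm_real, Real.norm_eq_abs, abs_le]
    exact ⟨by linarith [sc_nonneg r q.1], sc_le_one r q.1⟩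
  have h0 := norm_nonneg (f (q.1, 0))
  have h1 := norm_nonneg (f (q.1, 1))
  rw [Cfun]
  split
  · refine (norm_add_le _ _).trans ?_
    rw [norm_mul, norm_mul]
    nlinarith
  · refine (norm_sub_le _ _).trans ?_
    rw [norm_mul, norm_mul]
    nlinarith

lemma rpow_two (a : ℝ) : a ^ ((2 : ℝ≥0∞)).toReal = a ^ 2 := by
  rw [ENNReal.toReal_ofNat]
  exact_mod_cast Real.rpow_natCast a 2


lemma summable_sq (f : H) : Summable (fun q : ℤ × Fin 2 => ‖f q‖ ^ 2) := by
  have h := (lp.memℓp f).summable (p := 2) (by norm_num)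
  exact h.congr fun q => rpow_two _

lemma memℓp_Cfun (r : ℤ → ℝ) (hr : ∀ x, r x ∈ Set.Icc (0:ℝ) 1) (f : H) :
    Memℓp (Cfun r ⇑f) 2 := by
  have hsum := summable_sq f
  have h0 : Summable (fun x : ℤ => ‖f (x, 0)‖ ^ 2) :=
    hsum.comp_injective (i := fun x : ℤ => ((x, 0) : ℤ × Fin 2))
      (fun a b h => by simpa using (Prod.ext_iff.1 h).1)
  have h1 : Summable (fun x : ℤ => ‖f (x, 1)‖ ^ 2) :=
    hsum.comp_injective (i := fun x : ℤ => ((x, 1) : ℤ × Fin 2))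
      (fun a b h => by simpa using (Prod.ext_iff.1 h).1)
  have hm : Summable (fun x : ℤ => 2 * (‖f (x, 0)‖ ^ 2 + ‖f (x, 1)‖ ^ 2)) :=
    (h0.add h1).mul_left 2
  have hM : Summable (fun q : ℤ × Fin 2 => 2 * (‖f (q.1, 0)‖ ^ 2 + ‖f (q.1, 1)‖ ^ 2)) := by
    refine (summable_prod_of_nonneg ?_).2 ⟨fun x => Summable.of_finite, ?_⟩
    · intro q; positivity
    · refine Summable.congr (hm.add hm) fun x => ?_
      rw [tsum_fintype, Fin.sum_univ_two]
  apply memℓp_gen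
  refine Summable.congr (f := fun q : ℤ × Fin 2 => ‖Cfun r ⇑f q‖ ^ 2) ?_
    (fun q => (rpow_two _).symm)
  refine hM.of_nonneg_of_le (fun q => by positivity) fun q => ?_
  have h := norm_Cfun_le r hr ⇑f q
  have h2 : ‖Cfun r ⇑f q‖ * ‖Cfun r ⇑f q‖ ≤
      (‖f (q.1, 0)‖ + ‖f (q.1, 1)‖) * (‖f (q.1, 0)‖ + ‖f (q.1, 1)‖) :=
    mul_le_mul h h (norm_nonneg _) (by positivity)
  nlinarith [sq_nonneg (‖(f : ℤ × Fin 2 → ℂ) (q.1, 0)‖ - ‖(f : ℤ × Fin 2 → ℂ) (q.1, 1)‖)]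

def Clin (r : ℤ → ℝ) (hr : ∀ x, r x ∈ Set.Icc (0:ℝ) 1) : H →ₗ[ℂ] H where
  toFun f := ⟨Cfun r ⇑f, memℓp_Cfun r hr f⟩
  map_add' f g := by
    refine lp.ext (funext fun q => ?_)
    simp only [lp.coeFn_add, Pi.add_apply, Cfun]
    split <;> ring
  map_smul' c f := by
    refine lp.ext (funext fun q => ?_)
    simp only [lp.coeFn_smul, Pi.smul_apply, Cfun, RingHom.id_apply, smul_eq_mul]
    split <;> ring

lemma Clin_apply (r : ℤ → ℝ) (hr : ∀ x, r x ∈ Set.Icc (0:ℝ) 1) (f : H) :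
    ⇑(Clin r hr f) = Cfun r ⇑f := rfl

lemma tsum_pair (g : ℤ × Fin 2 → ℝ) (hg : Summable g) :
    ∑' q : ℤ × Fin 2, g q = ∑' x : ℤ, (g (x, 0) + g (x, 1)) := by
  rw [Summable.tsum_prod hg]
  exact tsum_congr fun x => by rw [tsum_fintype, Fin.sum_univ_two]

lemma norm_Clin_le (r : ℤ → ℝ) (hr : ∀ x, r x ∈ Set.Icc (0:ℝ) 1) (f : H) :
    ‖Clin r hr f‖ ≤ 2 * ‖f‖ := by
  have hsum := summable_sq f
  have hCsum : Summable (fun q : ℤ × Fin 2 => ‖Cfun r ⇑f q‖ ^ 2) := by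
    have := (lp.memℓp (Clin r hr f)).summable (p := 2) (by norm_num)
    rw [Clin_apply] at this
    exact this.congr fun q => rpow_two _
  apply lp.norm_le_of_tsum_le (by norm_num) (by positivity)
  have key : ∑' q : ℤ × Fin 2, ‖(Clin r hr f) q‖ ^ ((2:ℝ≥0∞)).toReal ≤ (2 * ‖f‖) ^ 2 := by
    have e1 : ∑' q : ℤ × Fin 2, ‖(Clin r hr f) q‖ ^ ((2:ℝ≥0∞)).toReal
        = ∑' q : ℤ × Fin 2, ‖Cfun r ⇑f q‖ ^ 2 := by
      rw [Clin_apply]; exact tsum_congr fun q => rpow_two _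
    rw [e1]
    have h0 : Summable (fun x : ℤ => ‖f (x, 0)‖ ^ 2) :=
      hsum.comp_injective (i := fun x : ℤ => ((x, 0) : ℤ × Fin 2))
        (fun a b h => by simpa using (Prod.ext_iff.1 h).1)
    have h1 : Summable (fun x : ℤ => ‖f (x, 1)‖ ^ 2) :=
      hsum.comp_injective (i := fun x : ℤ => ((x, 1) : ℤ × Fin 2))
        (fun a b h => by simpa using (Prod.ext_iff.1 h).1)
    have hnf : ‖f‖ ^ 2 = ∑' x : ℤ, (‖f (x, 0)‖ ^ 2 + ‖f (x, 1)‖ ^ 2) := by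
      have := lp.norm_rpow_eq_tsum (p := 2) (by norm_num) f
      rw [rpow_two] at this
      rw [this, ← tsum_pair _ hsum]
      exact tsum_congr fun q => rpow_two _
    have hb : ∑' q : ℤ × Fin 2, ‖Cfun r ⇑f q‖ ^ 2
        = ∑' x : ℤ, (‖Cfun r ⇑f (x, 0)‖ ^ 2 + ‖Cfun r ⇑f (x, 1)‖ ^ 2) := tsum_pair _ hCsum
    rw [hb]
    have hle : ∑' x : ℤ, (‖Cfun r ⇑f (x, 0)‖ ^ 2 + ‖Cfun r ⇑f (x, 1)‖ ^ 2)
        ≤ ∑' x : ℤ, 4 * (‖f (x, 0)‖ ^ 2 + ‖f (x, 1)‖ ^ 2) := by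
      refine Summable.tsum_le_tsum (fun x => ?_) ?_ ((h0.add h1).mul_left 4)
      · have ha := norm_Cfun_le r hr ⇑f (x, 0)
        have hbb := norm_Cfun_le r hr ⇑f (x, 1)
        have h2 : ‖Cfun r ⇑f (x, 0)‖ * ‖Cfun r ⇑f (x, 0)‖ ≤
            (‖f (x, 0)‖ + ‖f (x, 1)‖) * (‖f (x, 0)‖ + ‖f (x, 1)‖) :=
          mul_le_mul ha ha (norm_nonneg _) (by positivity)
        have h3 : ‖Cfun r ⇑f (x, 1)‖ * ‖Cfun r ⇑f (x, 1)‖ ≤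
            (‖f (x, 0)‖ + ‖f (x, 1)‖) * (‖f (x, 0)‖ + ‖f (x, 1)‖) :=
          mul_le_mul hbb hbb (norm_nonneg _) (by positivity)
        nlinarith [sq_nonneg (‖(f : ℤ × Fin 2 → ℂ) (x, 0)‖ - ‖(f : ℤ × Fin 2 → ℂ) (x, 1)‖)]
      · -- summability of LHS
        have := hCsum
        have h0' : Summable (fun x : ℤ => ‖Cfun r ⇑f (x, 0)‖ ^ 2) :=
          this.comp_injective (i := fun x : ℤ => ((x, 0) : ℤ × Fin 2))
            (fun a b h => by simpa using (Prod.ext_iff.1 h).1)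
        have h1' : Summable (fun x : ℤ => ‖Cfun r ⇑f (x, 1)‖ ^ 2) :=
          this.comp_injective (i := fun x : ℤ => ((x, 1) : ℤ × Fin 2))
            (fun a b h => by simpa using (Prod.ext_iff.1 h).1)
        exact h0'.add h1'
    calc _ ≤ ∑' x : ℤ, 4 * (‖f (x, 0)‖ ^ 2 + ‖f (x, 1)‖ ^ 2) := hle
    _ = 4 * ∑' x : ℤ, (‖f (x, 0)‖ ^ 2 + ‖f (x, 1)‖ ^ 2) := tsum_mul_left
    _ = (2 * ‖f‖) ^ 2 := by rw [← hnf]; ring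
  calc ∑' q : ℤ × Fin 2, ‖(Clin r hr f) q‖ ^ ((2:ℝ≥0∞)).toReal ≤ (2 * ‖f‖) ^ 2 := key
  _ = (2 * ‖f‖) ^ ((2:ℝ≥0∞)).toReal := (rpow_two _).symm

def C (r : ℤ → ℝ) (hr : ∀ x, r x ∈ Set.Icc (0:ℝ) 1) : H →L[ℂ] H :=
  LinearMap.mkContinuous (Clin r hr) 2 (norm_Clin_le r hr)

lemma C_apply (r : ℤ → ℝ) (hr : ∀ x, r x ∈ Set.Icc (0:ℝ) 1) (f : H) :
    ⇑(C r hr f) = Cfun r ⇑f := rfl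

lemma C_e0 (r : ℤ → ℝ) (hr : ∀ x, r x ∈ Set.Icc (0:ℝ) 1) (x : ℤ) :
    C r hr (e x 0) = (r x : ℂ) • e x 0 + (sc r x : ℂ) • e x 1 := by
  refine lp.ext (funext fun q => ?_)
  obtain ⟨y, j⟩ := q
  have hco : (((r x : ℂ) • e x 0 + (sc r x : ℂ) • e x 1) : H) (y, j)
      = (r x : ℂ) * (e x 0 : H) (y, j) + (sc r x : ℂ) * (e x 1 : H) (y, j) := by
    rw [lp.coeFn_add, Pi.add_apply, lp.coeFn_smul, lp.coeFn_smul]; rfl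
  rw [C_apply, hco]
  fin_cases j <;>
    by_cases hy : y = x <;>
      simp [Cfun, e, lp.single_apply, hy, Prod.ext_iff]

lemma C_e1 (r : ℤ → ℝ) (hr : ∀ x, r x ∈ Set.Icc (0:ℝ) 1) (x : ℤ) :
    C r hr (e x 1) = (sc r x : ℂ) • e x 0 - (r x : ℂ) • e x 1 := by
  refine lp.ext (funext fun q => ?_)
  obtain ⟨y, j⟩ := q
  have hco : (((sc r x : ℂ) • e x 0 - (r x : ℂ) • e x 1) : H) (y, j)
      = (sc r x : ℂ) * (e x 0 : H) (y, j) - (r x : ℂ) * (e x 1 : H) (y, j) := by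
    rw [lp.coeFn_sub, Pi.sub_apply, lp.coeFn_smul, lp.coeFn_smul]; rfl
  rw [C_apply, hco]
  fin_cases j <;>
    by_cases hy : y = x <;>
      simp [Cfun, e, lp.single_apply, hy, Prod.ext_iff]

lemma C_selfAdjoint (r : ℤ → ℝ) (hr : ∀ x, r x ∈ Set.Icc (0:ℝ) 1) :
    star (C r hr) = C r hr := by
  rw [ContinuousLinearMap.star_eq_adjoint]
  have h : C r hr = ContinuousLinearMap.adjoint (C r hr) := by
    rw [ContinuousLinearMap.eq_adjoint_iff]
    intro u v
    rw [lp.inner_eq_tsum, lp.inner_eq_tsum]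
    rw [Summable.tsum_prod (lp.hasSum_inner (𝕜 := ℂ) (C r hr u) v).summable,
        Summable.tsum_prod (lp.hasSum_inner (𝕜 := ℂ) u (C r hr v)).summable]
    refine tsum_congr fun x => ?_
    rw [tsum_fintype, tsum_fintype, Fin.sum_univ_two, Fin.sum_univ_two]
    simp only [C_apply, Cfun, RCLike.inner_apply]
    norm_num [map_add, map_sub, map_mul, Complex.conj_ofReal]
    ring
  exact h.symm

lemma C_mul_C (r : ℤ → ℝ) (hr : ∀ x, r x ∈ Set.Icc (0:ℝ) 1) :
    C r hr * C r hr = 1 := by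
  refine ContinuousLinearMap.ext fun f => ?_
  rw [ContinuousLinearMap.mul_apply, ContinuousLinearMap.one_apply]
  refine lp.ext ?_
  funext q
  obtain ⟨x, j⟩ := q
  have hrs : ((r x : ℂ)) ^ 2 + ((sc r x : ℂ)) ^ 2 = 1 := by
    exact_mod_cast congrArg (fun t : ℝ => (t : ℂ)) (sc_sq r hr x)
  have happ : (C r hr (C r hr f) : H) (x, j) = Cfun r (Cfun r ⇑f) (x, j) := by
    rw [C_apply, C_apply]
  rw [happ]
  fin_cases j
  · simp only [Cfun]
    norm_num
    linear_combination (⇑f (x, (0 : Fin 2))) * hrs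
  · simp only [Cfun]
    norm_num
    linear_combination (⇑f (x, (1 : Fin 2))) * hrs

lemma dense_span_e :
    Dense (↑(Submodule.span ℂ (Set.range fun q : ℤ × Fin 2 => e q.1 q.2)) : Set H) := by
  intro f
  have hs := lp.hasSum_single (E := fun _ : ℤ × Fin 2 => ℂ) (p := 2) (by norm_num) f
  refine mem_closure_of_tendsto hs (Filter.Eventually.of_forall fun t => ?_)
  refine Submodule.sum_mem _ fun q hq => ?_
  obtain ⟨a, b⟩ := q
  have h1 : lp.single (E := fun _ : ℤ × Fin 2 => ℂ) 2 (a, b) (f (a, b))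
      = (f (a, b)) • e a b := by
    rw [e, ← lp.single_smul, smul_eq_mul, mul_one]
  rw [h1]
  exact Submodule.smul_mem _ _ (Submodule.subset_span ⟨(a, b), rfl⟩)

lemma star_clm (V : H ≃ₗᵢ[ℂ] H) : star (clm V) = clm V.symm := by
  rw [ContinuousLinearMap.star_eq_adjoint]
  have h : clm V.symm = ContinuousLinearMap.adjoint (clm V) := by
    rw [ContinuousLinearMap.eq_adjoint_iff]
    intro u v
    have : (inner ℂ (V.symm u) v : ℂ) = inner ℂ (V (V.symm u)) (V v) :=
      (V.inner_map_map _ _).symm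
    rw [LinearIsometryEquiv.apply_symm_apply] at this
    exact this
  exact h.symm

lemma clm_apply (V : H ≃ₗᵢ[ℂ] H) (f : H) : clm V f = V f := rfl

end Chiral

/-- **Proposition 4.3.** The quantum walk `U_{p,r,0,0}`
(i.e. `θ = κ = 0`) has chiral symmetry: there is a self-adjoint unitary `Γ`
on `H` with `Γ U_{p,r,0,0} Γ = (U_{p,r,0,0})*`. -/

theorem Uprtk_chiral_symmetry (p r : ℤ → ℝ)
    (hp : ∀ x : ℤ, p x ∈ Set.Icc (0 : ℝ) 1) (hr : ∀ x : ℤ, r x ∈ Set.Icc (0 : ℝ) 1)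
    (V : H ≃ₗᵢ[ℂ] H)
    (hV : IsUprtk p r (fun _ => 0) (fun _ => 0) V) :
    ∃ Γ : H →L[ℂ] H, Γ ∈ unitary (H →L[ℂ] H) ∧ IsSelfAdjoint Γ ∧
      Γ * (clm V) * Γ = star (clm V) := by
  classical
  refine ⟨Chiral.C r hr, ?_, Chiral.C_selfAdjoint r hr, ?_⟩
  · rw [Unitary.mem_iff, Chiral.C_selfAdjoint r hr, Chiral.C_mul_C r hr]
    exact ⟨rfl, rfl⟩
  · have hV1 : ∀ x : ℤ, V ((r x : ℂ) • e x 0 + (Chiral.sc r x : ℂ) • e x 1)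
        = (p x : ℂ) • e x 0 + (Chiral.sc p x : ℂ) • e (x + 1) 1 := by
      intro x
      have h := (hV x).1
      simpa [Chiral.sc] using h
    have hV2 : ∀ x : ℤ, V ((Chiral.sc r x : ℂ) • e x 0 - (r x : ℂ) • e x 1)
        = (Chiral.sc p (x - 1) : ℂ) • e (x - 1) 0 - (p (x - 1) : ℂ) • e x 1 := by
      intro x
      have h := (hV x).2
      simpa [Chiral.sc] using h
    have hpq : ∀ x : ℤ, ((p x : ℂ)) * (p x : ℂ)
        + ((Chiral.sc p x : ℂ)) * (Chiral.sc p x : ℂ) = 1 := by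
      intro x
      have h := congrArg (fun t : ℝ => (t : ℂ)) (Chiral.sc_sq p hp x)
      push_cast at h
      linear_combination h
    have hs : ∀ (a b : H), V a = b → a = V.symm b := fun a b h => by
      rw [← h, LinearIsometryEquiv.symm_apply_apply]
    rw [Chiral.star_clm]
    refine ContinuousLinearMap.ext_on Chiral.dense_span_e ?_
    rintro _ ⟨⟨x, i⟩, rfl⟩
    simp only [ContinuousLinearMap.mul_apply]
    fin_cases i
    · show Chiral.C r hr (clm V (Chiral.C r hr (e x 0))) = clm V.symm (e x 0)
      rw [Chiral.C_e0, Chiral.clm_apply, hV1 x, map_add, map_smul, map_smul,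
        Chiral.C_e0, Chiral.C_e1, Chiral.clm_apply]
      refine hs _ _ ?_
      rw [map_add, map_smul, map_smul, hV1 x, hV2 (x + 1)]
      simp only [add_sub_cancel_right]
      have key : ∀ u v : H, (p x : ℂ) • ((p x : ℂ) • u + (Chiral.sc p x : ℂ) • v)
          + (Chiral.sc p x : ℂ) • ((Chiral.sc p x : ℂ) • u - (p x : ℂ) • v)
          = (((p x : ℂ)) * (p x : ℂ) + ((Chiral.sc p x : ℂ)) * (Chiral.sc p x : ℂ)) • u := by
        intro u v; module
      rw [key, hpq x, one_smul]
    · show Chiral.C r hr (clm V (Chiral.C r hr (e x 1))) = clm V.symm (e x 1)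
      rw [Chiral.C_e1, Chiral.clm_apply, hV2 x, map_sub, map_smul, map_smul,
        Chiral.C_e0, Chiral.C_e1, Chiral.clm_apply]
      refine hs _ _ ?_
      rw [map_sub, map_smul, map_smul, hV1 (x - 1), hV2 x]
      simp only [sub_add_cancel]
      have key : ∀ u v : H, (Chiral.sc p (x - 1) : ℂ) • ((p (x - 1) : ℂ) • u
            + (Chiral.sc p (x - 1) : ℂ) • v)
          - (p (x - 1) : ℂ) • ((Chiral.sc p (x - 1) : ℂ) • u - (p (x - 1) : ℂ) • v)
          = (((p (x - 1) : ℂ)) * (p (x - 1) : ℂ)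
            + ((Chiral.sc p (x - 1) : ℂ)) * (Chiral.sc p (x - 1) : ℂ)) • v := by
        intro u v; module
      rw [key, hpq (x - 1), one_smul]
end
end

section
/- Let p, a : ℤ → ℝ and q, b : ℤ → ℂ satisfy p_x² + |q_x|² = 1 and a_x² + |b_x|² = 1 for all x ∈ ℤ, and let U be the associated Suzuki split-step quantum walk. Then U is unitarily equivalent to U_{p,a}, the operator obtained from the same data with q_x and b_x replaced by their moduli |q_x| and |b_x|. -/
noncomputable section

/-- `U` is the Suzuki split-step quantum walk with data `p, a : ℤ → ℝ`,
`q, b : ℤ → ℂ`: it sends `a_x e₁ˣ + b_x e₂ˣ` to `p_x e₁ˣ + conj(q_x) e₂^{x+1}`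
and `conj(b_x) e₁ˣ − a_x e₂ˣ` to `q_{x−1} e₁^{x−1} − p_{x−1} e₂ˣ`. -/
def IsSuzuki (p a : ℤ → ℝ) (q b : ℤ → ℂ) (U : H ≃ₗᵢ[ℂ] H) : Prop :=
  ∀ x : ℤ,
    U ((a x : ℂ) • e x 0 + (b x) • e x 1)
      = (p x : ℂ) • e x 0 + (starRingEnd ℂ) (q x) • e (x + 1) 1 ∧
    U ((starRingEnd ℂ) (b x) • e x 0 - (a x : ℂ) • e x 1)
      = (q (x - 1)) • e (x - 1) 0 - (p (x - 1) : ℂ) • e x 1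

section helpers
open scoped ENNReal

/-- sign of a complex number, with `sg 0 = 1`. -/
def sg (z : ℂ) : ℂ := if z = 0 then 1 else (‖z‖ : ℂ)⁻¹ * z

lemma abs_ne_zero' {z : ℂ} (h : z ≠ 0) : ((‖z‖ : ℝ) : ℂ) ≠ 0 := by
  simpa using h

lemma sg_mul_abs (z : ℂ) : sg z * (‖z‖ : ℂ) = z := by
  by_cases h : z = 0
  · simp [sg, h]
  · rw [sg, if_neg h]
    field_simp
    exact div_self (abs_ne_zero' h)

lemma norm_sg (z : ℂ) : ‖sg z‖ = 1 := by
  by_cases h : z = 0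
  · simp [sg, h]
  · rw [sg, if_neg h]
    rw [norm_mul, norm_inv, Complex.norm_real, Real.norm_eq_abs,
      _root_.abs_of_nonneg (norm_nonneg z)]
    rw [inv_mul_cancel₀ (norm_ne_zero_iff.mpr h)]

lemma sg_ne_zero (z : ℂ) : sg z ≠ 0 := by
  intro h
  have := norm_sg z
  rw [h] at this; simp at this

lemma conj_sg_mul (z : ℂ) : (starRingEnd ℂ) (sg z) * z = (‖z‖ : ℂ) := by
  by_cases h : z = 0
  · simp [sg, h]
  · rw [sg, if_neg h, map_mul, map_inv₀, Complex.conj_ofReal]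
    rw [mul_assoc, mul_comm ((starRingEnd ℂ) z) z, Complex.mul_conj, Complex.normSq_eq_norm_sq]
    have hne := abs_ne_zero' h
    push_cast
    field_simp

lemma sg_mul_conj (z : ℂ) : sg z * (starRingEnd ℂ) z = (‖z‖ : ℂ) := by
  have := congrArg (starRingEnd ℂ) (conj_sg_mul z)
  simpa [map_mul, Complex.conj_ofReal, mul_comm] using this

lemma unit_conj_mul {z : ℂ} (h : ‖z‖ = 1) : (starRingEnd ℂ) z * z = 1 := by
  rw [mul_comm, Complex.mul_conj, Complex.normSq_eq_norm_sq, h]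
  norm_num

section gam
variable (s : ℤ → ℂ)

/-- forward products -/
def gamF : ℕ → ℂ
  | 0 => 1
  | n + 1 => gamF n * s n

/-- backward products -/
def gamB : ℕ → ℂ
  | 0 => (s (-1))⁻¹
  | n + 1 => gamB n * (s (-(n + 2)))⁻¹

/-- the solution of `γ (x+1) = γ x * s x`, `γ 0 = 1`. -/
def gam : ℤ → ℂ
  | .ofNat n => gamF s n
  | .negSucc n => gamB s n

lemma gam_succ (hs : ∀ x, s x ≠ 0) (x : ℤ) : gam s (x + 1) = gam s x * s x := by
  cases x with
  | ofNat n =>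
    show gam s (Int.ofNat (n + 1)) = gam s (Int.ofNat n) * s (Int.ofNat n)
    rfl
  | negSucc n =>
    cases n with
    | zero =>
      show gam s 0 = gam s (Int.negSucc 0) * s (Int.negSucc 0)
      show (1 : ℂ) = (s (-1))⁻¹ * s (-1)
      rw [inv_mul_cancel₀ (hs (-1))]
    | succ m =>
      have h : Int.negSucc (m + 1) + 1 = Int.negSucc m := by
        rw [Int.negSucc_eq, Int.negSucc_eq]; push_cast; ring
      rw [h]
      show gamB s m = gamB s (m + 1) * s (Int.negSucc (m + 1))
      have h2 : (Int.negSucc (m + 1)) = -((m : ℤ) + 2) := by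
        rw [Int.negSucc_eq]; push_cast; ring
      rw [h2]
      show gamB s m = gamB s m * (s (-((m : ℤ) + 2)))⁻¹ * s (-((m : ℤ) + 2))
      rw [mul_assoc, inv_mul_cancel₀ (hs _), mul_one]

lemma norm_gam (hs : ∀ x, ‖s x‖ = 1) (x : ℤ) : ‖gam s x‖ = 1 := by
  cases x with
  | ofNat n =>
    show ‖gamF s n‖ = 1
    induction n with
    | zero => simp [gamF]
    | succ m ih => rw [gamF, norm_mul, ih, hs]; norm_num
  | negSucc n =>
    show ‖gamB s n‖ = 1
    induction n with
    | zero => rw [gamB, norm_inv, hs]; norm_num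
    | succ m ih => rw [gamB, norm_mul, norm_inv, ih, hs]; norm_num

end gam

section W
variable (μ : ℤ × Fin 2 → ℂ)

lemma memℓp_mul (hμ : ∀ k, ‖μ k‖ = 1) (f : H) :
    Memℓp (fun k => μ k * f k) 2 := by
  apply memℓp_gen
  have h2 : (0:ℝ) < (2 : ℝ≥0∞).toReal := by norm_num
  have h := (lp.memℓp f).summable h2
  refine h.congr fun k => ?_
  rw [norm_mul, hμ k, one_mul]

/-- multiplication by a unimodular function as a unitary on `H`. -/
def Wmul (hμ : ∀ k, ‖μ k‖ = 1) : H ≃ₗᵢ[ℂ] H where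
  toLinearEquiv :=
  { toFun := fun f => ⟨fun k => μ k * f k, memℓp_mul μ hμ f⟩
    map_add' := by
      intro f g
      apply Subtype.ext
      funext k
      show μ k * (f + g) k = μ k * f k + μ k * g k
      rw [lp.coeFn_add, Pi.add_apply, mul_add]
    map_smul' := by
      intro c f
      apply Subtype.ext
      funext k
      show μ k * (c • f) k = c * (μ k * f k)
      rw [lp.coeFn_smul, Pi.smul_apply, smul_eq_mul]
      ring
    invFun := fun f => ⟨fun k => (starRingEnd ℂ) (μ k) * f k,
      memℓp_mul _ (fun k => by rw [RCLike.norm_conj]; exact hμ k) f⟩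
    left_inv := by
      intro f
      apply Subtype.ext
      funext k
      show (starRingEnd ℂ) (μ k) * (μ k * f k) = f k
      rw [← mul_assoc, unit_conj_mul (hμ k), one_mul]
    right_inv := by
      intro f
      apply Subtype.ext
      funext k
      show μ k * ((starRingEnd ℂ) (μ k) * f k) = f k
      rw [← mul_assoc, mul_comm (μ k), unit_conj_mul (hμ k), one_mul] }
  norm_map' := by
    intro f
    have h2 : (0:ℝ) < (2 : ℝ≥0∞).toReal := by norm_num
    have hL := lp.norm_rpow_eq_tsum h2 (⟨fun k => μ k * f k, memℓp_mul μ hμ f⟩ : H)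
    have hR := lp.norm_rpow_eq_tsum h2 f
    have he : ∀ k : ℤ × Fin 2,
        ‖(⟨fun k => μ k * f k, memℓp_mul μ hμ f⟩ : H) k‖ ^ (2 : ℝ≥0∞).toReal
          = ‖f k‖ ^ (2 : ℝ≥0∞).toReal := by
      intro k
      show ‖μ k * f k‖ ^ (2 : ℝ≥0∞).toReal = _
      rw [norm_mul, hμ k, one_mul]
    have key : ‖(⟨fun k => μ k * f k, memℓp_mul μ hμ f⟩ : H)‖ ^ (2 : ℝ≥0∞).toReal
        = ‖f‖ ^ (2 : ℝ≥0∞).toReal := by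
      rw [hL, hR]; exact tsum_congr he
    have h1 : (0:ℝ) ≤ ‖(⟨fun k => μ k * f k, memℓp_mul μ hμ f⟩ : H)‖ := norm_nonneg _
    have h3 : (0:ℝ) ≤ ‖f‖ := norm_nonneg _
    exact Real.rpow_left_injOn (by norm_num) h1 h3 key

end W


section Wlemmas
variable (μ : ℤ × Fin 2 → ℂ) (hμ : ∀ k, ‖μ k‖ = 1)

lemma Wmul_single (k : ℤ × Fin 2) (c : ℂ) :
    Wmul μ hμ (lp.single 2 k c) = μ k • lp.single 2 k c := by
  apply Subtype.ext
  funext j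
  show μ j * (lp.single 2 k c : ∀ _ : ℤ × Fin 2, ℂ) j = (μ k • lp.single 2 k c : H) j
  rw [lp.coeFn_smul, Pi.smul_apply, smul_eq_mul]
  by_cases hj : j = k
  · subst hj
    rw [lp.single_apply_self (E := fun _ : ℤ × Fin 2 => ℂ)]
  · rw [lp.single_apply_ne (E := fun _ : ℤ × Fin 2 => ℂ) 2 k c hj, mul_zero, mul_zero]

lemma Wmul_e (x : ℤ) (i : Fin 2) : Wmul μ hμ (e x i) = μ (x, i) • e x i :=
  Wmul_single μ hμ (x, i) 1

lemma Wmul_symm_e (x : ℤ) (i : Fin 2) :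
    (Wmul μ hμ).symm (e x i) = (starRingEnd ℂ) (μ (x, i)) • e x i := by
  have h1 : Wmul μ hμ ((starRingEnd ℂ) (μ (x, i)) • e x i) = e x i := by
    rw [map_smul, Wmul_e, smul_smul, unit_conj_mul (hμ (x, i)), one_smul]
  exact (Wmul μ hμ).injective (by rw [h1, (Wmul μ hμ).apply_symm_apply])

lemma Wmul_map_Hx (x : ℤ) :
    (Hx x).map ((Wmul μ hμ).toLinearEquiv : H →ₗ[ℂ] H) = Hx x := by
  have hne : ∀ k : ℤ × Fin 2, μ k ≠ 0 := by
    intro k h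
    have := hμ k
    rw [h] at this; simp at this
  rw [Hx, Submodule.map_span]
  have himg : (((Wmul μ hμ).toLinearEquiv : H →ₗ[ℂ] H) '' {e x 0, e x 1})
      = {μ (x, 0) • e x 0, μ (x, 1) • e x 1} := by
    rw [Set.image_insert_eq, Set.image_singleton]
    show {Wmul μ hμ (e x 0), Wmul μ hμ (e x 1)} = _
    rw [Wmul_e, Wmul_e]
  rw [himg]
  apply le_antisymm
  · apply Submodule.span_le.2
    rintro y (rfl | rfl)
    · exact Submodule.smul_mem _ _ (Submodule.subset_span (by simp))
    · exact Submodule.smul_mem _ _ (Submodule.subset_span (by simp))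
  · apply Submodule.span_le.2
    rintro y (rfl | rfl)
    · have h0 := Submodule.smul_mem
        (Submodule.span ℂ ({μ (x, 0) • e x 0, μ (x, 1) • e x 1} : Set H)) (μ (x, 0))⁻¹
        (Submodule.subset_span (Set.mem_insert _ _))
      rwa [smul_smul, inv_mul_cancel₀ (hne _), one_smul] at h0
    · have h0 := Submodule.smul_mem
        (Submodule.span ℂ ({μ (x, 0) • e x 0, μ (x, 1) • e x 1} : Set H)) (μ (x, 1))⁻¹
        (Submodule.subset_span (Set.mem_insert_of_mem _ rfl))
      rwa [smul_smul, inv_mul_cancel₀ (hne _), one_smul] at h0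

end Wlemmas

lemma ext_of_e {S T : H ≃ₗᵢ[ℂ] H} (h : ∀ x i, S (e x i) = T (e x i)) : S = T := by
  refine LinearIsometryEquiv.ext fun f => ?_
  have hsum := lp.hasSum_single ENNReal.ofNat_ne_top f
  have h2 : ∀ k : ℤ × Fin 2, lp.single 2 k (f k) = f k • e k.1 k.2 := by
    intro k
    rw [e, ← lp.single_smul, smul_eq_mul, mul_one]
  have hS := hsum.mapL S.toLinearIsometry.toContinuousLinearMap
  have hT := hsum.mapL T.toLinearIsometry.toContinuousLinearMap
  have hfun : (fun k : ℤ × Fin 2 => S.toLinearIsometry.toContinuousLinearMap (lp.single 2 k (f k)))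
      = fun k : ℤ × Fin 2 => T.toLinearIsometry.toContinuousLinearMap (lp.single 2 k (f k)) := by
    funext k
    show S (lp.single 2 k (f k)) = T (lp.single 2 k (f k))
    rw [h2, map_smul, map_smul, h]
  rw [hfun] at hS
  exact hS.unique hT

lemma isSuzuki_ext (p a : ℤ → ℝ) (q b : ℤ → ℂ)
    (hab : ∀ x : ℤ, ((a x : ℂ)) ^ 2 + b x * (starRingEnd ℂ) (b x) = 1)
    {S T : H ≃ₗᵢ[ℂ] H} (hS : IsSuzuki p a q b S) (hT : IsSuzuki p a q b T) : S = T := by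
  apply ext_of_e
  intro x i
  have h0 : e x 0 = (a x : ℂ) • ((a x : ℂ) • e x 0 + b x • e x 1)
      + b x • ((starRingEnd ℂ) (b x) • e x 0 - (a x : ℂ) • e x 1) := by
    have hc : (a x : ℂ) • ((a x : ℂ) • e x 0 + b x • e x 1)
        + b x • ((starRingEnd ℂ) (b x) • e x 0 - (a x : ℂ) • e x 1)
        = ((a x : ℂ) ^ 2 + b x * (starRingEnd ℂ) (b x)) • e x 0 := by
      match_scalars <;> ring
    rw [hc, hab, one_smul]
  have h1 : e x 1 = (starRingEnd ℂ) (b x) • ((a x : ℂ) • e x 0 + b x • e x 1)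
      - (a x : ℂ) • ((starRingEnd ℂ) (b x) • e x 0 - (a x : ℂ) • e x 1) := by
    have hc : (starRingEnd ℂ) (b x) • ((a x : ℂ) • e x 0 + b x • e x 1)
        - (a x : ℂ) • ((starRingEnd ℂ) (b x) • e x 0 - (a x : ℂ) • e x 1)
        = ((a x : ℂ) ^ 2 + b x * (starRingEnd ℂ) (b x)) • e x 1 := by
      match_scalars <;> ring
    rw [hc, hab, one_smul]
  have key : ∀ R : H ≃ₗᵢ[ℂ] H, IsSuzuki p a q b R →
      R (e x 0) = (a x : ℂ) • ((p x : ℂ) • e x 0 + (starRingEnd ℂ) (q x) • e (x + 1) 1)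
        + b x • (q (x - 1) • e (x - 1) 0 - (p (x - 1) : ℂ) • e x 1) ∧
      R (e x 1) = (starRingEnd ℂ) (b x) • ((p x : ℂ) • e x 0 + (starRingEnd ℂ) (q x) • e (x + 1) 1)
        - (a x : ℂ) • (q (x - 1) • e (x - 1) 0 - (p (x - 1) : ℂ) • e x 1) := by
    intro R hR
    constructor
    · conv_lhs => rw [h0]
      rw [map_add, map_smul, map_smul, (hR x).1, (hR x).2]
    · conv_lhs => rw [h1]
      rw [map_sub, map_smul, map_smul, (hR x).1, (hR x).2]
  fin_cases i
  · show S (e x 0) = T (e x 0)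
    rw [(key S hS).1, (key T hT).1]
  · show S (e x 1) = T (e x 1)
    rw [(key S hS).2, (key T hT).2]

section main
variable (q b : ℤ → ℂ)

def sfun : ℤ → ℂ := fun x => sg (q x) * sg (b (x + 1))

def gamma : ℤ → ℂ := gam (sfun q b)

def delta : ℤ → ℂ := fun x => gamma q b x * (starRingEnd ℂ) (sg (b x))

def μfun : ℤ × Fin 2 → ℂ := fun k => if k.2 = 0 then gamma q b k.1 else delta q b k.1

lemma sfun_norm (x : ℤ) : ‖sfun q b x‖ = 1 := by
  rw [sfun, norm_mul, norm_sg, norm_sg, one_mul]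

lemma sfun_ne (x : ℤ) : sfun q b x ≠ 0 := mul_ne_zero (sg_ne_zero _) (sg_ne_zero _)

lemma gamma_norm (x : ℤ) : ‖gamma q b x‖ = 1 := norm_gam _ (sfun_norm q b) x

lemma delta_norm (x : ℤ) : ‖delta q b x‖ = 1 := by
  rw [delta, norm_mul, gamma_norm, RCLike.norm_conj, norm_sg, one_mul]

lemma μfun_norm (k : ℤ × Fin 2) : ‖μfun q b k‖ = 1 := by
  rw [μfun]
  split
  · exact gamma_norm q b k.1
  · exact delta_norm q b k.1

lemma μfun_zero (x : ℤ) : μfun q b (x, 0) = gamma q b x := rfl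

lemma μfun_one (x : ℤ) : μfun q b (x, 1) = delta q b x := by
  show (if (1 : Fin 2) = 0 then gamma q b x else delta q b x) = delta q b x
  norm_num

lemma delta_eq (x : ℤ) : delta q b x = gamma q b (x - 1) * sg (q (x - 1)) := by
  have h := gam_succ (sfun q b) (sfun_ne q b) (x - 1)
  rw [sub_add_cancel] at h
  rw [delta]
  show gam (sfun q b) x * _ = gam (sfun q b) (x - 1) * _
  rw [h, sfun, sub_add_cancel, mul_assoc, mul_assoc,
    mul_comm (sg (b x)) ((starRingEnd ℂ) (sg (b x))), unit_conj_mul (norm_sg (b x)), mul_one]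

lemma conj_sg_sg (z : ℂ) : (starRingEnd ℂ) (sg z) * sg z = 1 := unit_conj_mul (norm_sg z)


/-- **Corollary 4.4.** A Suzuki split-step quantum walk with
data `p, a, q, b` is unitarily equivalent to `U_{p,a}`, the Suzuki walk
obtained by replacing `q_x` and `b_x` with their moduli `|q_x|` and `|b_x|`. -/
theorem suzuki_equiv_modulus (p a : ℤ → ℝ) (q b : ℤ → ℂ)
    (hpq : ∀ x : ℤ, (p x) ^ 2 + ‖q x‖ ^ 2 = 1)
    (hab : ∀ x : ℤ, (a x) ^ 2 + ‖b x‖ ^ 2 = 1)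
    (U V : H ≃ₗᵢ[ℂ] H)
    (hU : IsSuzuki p a q b U)
    (hV : IsSuzuki p a (fun x => (‖q x‖ : ℂ))
      (fun x => (‖b x‖ : ℂ)) V) :
    UnitEquiv U V := by
  have hμ : ∀ k, ‖μfun q b k‖ = 1 := μfun_norm q b
  set W := Wmul (μfun q b) hμ with hW
  have hγ1 : ∀ x : ℤ, (starRingEnd ℂ) (gamma q b x) * gamma q b x = 1 :=
    fun x => unit_conj_mul (gamma_norm q b x)
  have hδ1 : ∀ x : ℤ, (starRingEnd ℂ) (delta q b x) * delta q b x = 1 :=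
    fun x => unit_conj_mul (delta_norm q b x)
  have hconjδ : ∀ x : ℤ, (starRingEnd ℂ) (delta q b x)
      = (starRingEnd ℂ) (gamma q b x) * sg (b x) := by
    intro x
    rw [delta, map_mul, Complex.conj_conj]
  refine ⟨W, fun x => Wmul_map_Hx (μfun q b) hμ x, ?_⟩
  have hab' : ∀ x : ℤ, (((a x : ℂ))) ^ 2
      + (‖b x‖ : ℂ) * (starRingEnd ℂ) ((‖b x‖ : ℂ)) = 1 := by
    intro x
    rw [Complex.conj_ofReal]
    have h := hab x
    have h2 : ((a x : ℂ)) ^ 2 + (‖b x‖ : ℂ) * (‖b x‖ : ℂ)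
        = (((a x) ^ 2 + (‖b x‖) ^ 2 : ℝ) : ℂ) := by push_cast; ring
    rw [h2, h, Complex.ofReal_one]
  have hU' : IsSuzuki p a (fun x => (‖q x‖ : ℂ))
      (fun x => (‖b x‖ : ℂ)) ((W.symm.trans U).trans W) := by
    intro x
    constructor
    · -- first defining relation
      show W (U (W.symm ((a x : ℂ) • e x 0 + (‖b x‖ : ℂ) • e x 1))) = _
      have hA : W.symm ((a x : ℂ) • e x 0 + (‖b x‖ : ℂ) • e x 1)
          = (starRingEnd ℂ) (gamma q b x) • ((a x : ℂ) • e x 0 + b x • e x 1) := by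
        rw [map_add, map_smul, map_smul, Wmul_symm_e, Wmul_symm_e, μfun_zero, μfun_one, hconjδ]
        match_scalars
        · ring
        · linear_combination (starRingEnd ℂ) (gamma q b x) * sg_mul_abs (b x)
      rw [hA, map_smul, (hU x).1, map_smul, map_add, map_smul, map_smul,
        Wmul_e, Wmul_e, μfun_zero, μfun_one, delta_eq, add_sub_cancel_right,
        Complex.conj_ofReal]
      match_scalars
      · linear_combination (p x : ℂ) * hγ1 x
      · linear_combination (starRingEnd ℂ) (q x) * sg (q x) * hγ1 x + sg_mul_conj (q x)
    · -- second defining relation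
      show W (U (W.symm ((starRingEnd ℂ) ((‖b x‖ : ℂ)) • e x 0
          - (a x : ℂ) • e x 1))) = _
      have hB : W.symm ((starRingEnd ℂ) ((‖b x‖ : ℂ)) • e x 0 - (a x : ℂ) • e x 1)
          = (starRingEnd ℂ) (delta q b x)
            • ((starRingEnd ℂ) (b x) • e x 0 - (a x : ℂ) • e x 1) := by
        rw [Complex.conj_ofReal, map_sub, map_smul, map_smul, Wmul_symm_e, Wmul_symm_e,
          μfun_zero, μfun_one, hconjδ]
        match_scalars
        · linear_combination (-(starRingEnd ℂ) (gamma q b x)) * sg_mul_conj (b x)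
        · ring
      rw [hB, map_smul, (hU x).2, map_smul, map_sub, map_smul, map_smul,
        Wmul_e, Wmul_e, μfun_zero, μfun_one]
      have hcd : (starRingEnd ℂ) (delta q b x)
          = (starRingEnd ℂ) (gamma q b (x - 1)) * (starRingEnd ℂ) (sg (q (x - 1))) := by
        rw [delta_eq, map_mul]
      rw [hcd, delta_eq]
      match_scalars
      · linear_combination (q (x - 1) * (starRingEnd ℂ) (sg (q (x - 1)))) * hγ1 (x - 1)
          + conj_sg_mul (q (x - 1))
      · linear_combination (-(p (x - 1) : ℂ)) * ((starRingEnd ℂ) (sg (q (x - 1))) * sg (q (x - 1)))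
          * hγ1 (x - 1) - (p (x - 1) : ℂ) * conj_sg_sg (q (x - 1))
  exact isSuzuki_ext p a _ _ hab' hV hU'

end main

end helpers
end
end
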